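/- arXiv:1504.06745 — 4 statements merged into one kernel-verified Lean document; each statement's English description precedes it below -/
import Mathlib

section
/- Let L and L' be real linear spaces, K ⊆ L a subset, and G : L → L' an affine map. If for every extreme point k' of G(K) the fiber G⁻¹(k') ∩ K has at least one extreme point, then G(ext(K)) ⊇ ext(G(K)). -/
/-- affine images of extreme points cover extreme points of the image. -/
theorem affine_image_extremePoints
    {L L' : Type*} [AddCommGroup L] [Module ℝ L] [AddCommGroup L'] [Module ℝ L']
    (G : L →ᵃ[ℝ] L') (K : Set L)
    (h : ∀ k' ∈ (⇑G '' K).extremePoints ℝ, ((⇑G ⁻¹' {k'} ∩ K).extremePoints ℝ).Nonempty) :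
    (⇑G '' K).extremePoints ℝ ⊆ ⇑G '' (K.extremePoints ℝ) := by
  intro k' hk'
  obtain ⟨x, hx⟩ := h k' hk'
  obtain ⟨⟨hxfib, hxK⟩, hxext⟩ := hx
  obtain ⟨hk'mem, hk'ext⟩ := hk'
  refine ⟨x, ⟨hxK, ?_⟩, hxfib⟩
  intro a ha b hb hseg
  have hGseg : G x ∈ openSegment ℝ (G a) (G b) := by
    rw [← image_openSegment]
    exact ⟨x, hseg, rfl⟩
  rw [hxfib] at hGseg
  have hGa := hk'ext ⟨a, ha, rfl⟩ ⟨b, hb, rfl⟩ hGseg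
  have hGb := hk'ext ⟨b, hb, rfl⟩ ⟨a, ha, rfl⟩ (openSegment_symm ℝ (G a) (G b) ▸ hGseg)
  exact hxext ⟨hGa, ha⟩ ⟨hGb, hb⟩ hseg
end

section
/- Let X be a Borel subset of a Polish metric space, let c : X × X → [0, ∞) be lower semicontinuous, let μₙ be a probability measure on X supported on at most n points, and ε > 0. Then the set Γ = {ν ∈ 𝓜(X×X) : P₁ν = μₙ and ∫ c dν ≤ ε} satisfies ext(Γ) ⊆ Δ_{n+2}(X×X), i.e., every extreme point of Γ is a convex combination of at most n+2 Dirac masses on X × X. -/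
open MeasureTheory

/-- An extreme point of a set of probability measures. -/
def IsExtremePt {Ω : Type*} [MeasurableSpace Ω]
    (C : Set (ProbabilityMeasure Ω)) (μ : ProbabilityMeasure Ω) : Prop :=
  μ ∈ C ∧ ∀ μ₁ ∈ C, ∀ μ₂ ∈ C, ∀ θ : ENNReal, 0 < θ → θ < 1 →
    (μ : Measure Ω) = θ • (μ₁ : Measure Ω) + (1 - θ) • (μ₂ : Measure Ω) →
    μ₁ = μ ∧ μ₂ = μ

/-- `μ` is supported on at most `n` points. -/
def FinitelySupported {α : Type*} [MeasurableSpace α] (n : ℕ) (μ : Measure α) : Prop :=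
  ∃ t : Finset α, t.card ≤ n ∧ μ ((↑t : Set α)ᶜ) = 0

/-- The moment-constrained set `Γ = {ν : P₁ν = μₙ, ∫ c dν ≤ ε}`. -/
def Gamma {α : Type*} [MeasurableSpace α] (μn : ProbabilityMeasure α)
    (c : α × α → ℝ) (ε : ℝ) : Set (ProbabilityMeasure (α × α)) :=
  {ν | (ν : Measure (α × α)).map Prod.fst = (μn : Measure α) ∧
    ∫⁻ p, ENNReal.ofReal (c p) ∂(ν : Measure (α × α)) ≤ ENNReal.ofReal ε}

lemma exists_mulVec_eq_zero {k m : ℕ} (hk : k < m) (M : Matrix (Fin k) (Fin m) ℝ) :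
    ∃ β : Fin m → ℝ, β ≠ 0 ∧ M.mulVec β = 0 := by
  by_contra h
  push_neg at h
  have hinj : Function.Injective M.mulVecLin := by
    rw [← LinearMap.ker_eq_bot, LinearMap.ker_eq_bot']
    intro β hβ
    by_contra hβ0
    exact h β hβ0 hβ
  have := LinearMap.finrank_le_finrank_of_injective hinj
  simp [Module.finrank_pi] at this
  omega

lemma subset_pair {γ : Type*} [Nonempty γ] {S : Set γ}
    (h : ¬ ∃ a ∈ S, ∃ b ∈ S, ∃ c ∈ S, a ≠ b ∧ a ≠ c ∧ b ≠ c) :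
    ∃ a b : γ, S ⊆ {a, b} := by
  by_cases h2 : ∃ a ∈ S, ∃ b ∈ S, a ≠ b
  · obtain ⟨a, ha, b, hb, hab⟩ := h2
    refine ⟨a, b, fun c hc => ?_⟩
    by_contra hcmem
    simp only [Set.mem_insert_iff, Set.mem_singleton_iff, not_or] at hcmem
    exact h ⟨a, ha, b, hb, c, hc, hab, fun e => hcmem.1 e.symm, fun e => hcmem.2 e.symm⟩
  · push_neg at h2
    obtain ⟨a⟩ := ‹Nonempty γ›
    by_cases hne : S.Nonempty
    · obtain ⟨x, hx⟩ := hne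
      exact ⟨x, x, fun c hc => by simp [h2 x hx c hc]⟩
    · exact ⟨a, a, fun c hc => absurd ⟨c, hc⟩ hne⟩

lemma subset_single {γ : Type*} [Nonempty γ] {S : Set γ}
    (h : ¬ ∃ a ∈ S, ∃ b ∈ S, a ≠ b) : ∃ a : γ, S ⊆ {a} := by
  push_neg at h
  by_cases hne : S.Nonempty
  · obtain ⟨x, hx⟩ := hne
    exact ⟨x, fun c hc => (h x hx c hc).symm⟩
  · obtain ⟨a⟩ := ‹Nonempty γ›
    exact ⟨a, fun c hc => absurd ⟨c, hc⟩ hne⟩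

/-- The topological support of a measure. -/
def msupp {α : Type*} [TopologicalSpace α] [MeasurableSpace α] (ρ : Measure α) : Set α :=
  {p | ∀ U : Set α, IsOpen U → p ∈ U → 0 < ρ U}

lemma measure_compl_msupp {α : Type*} [TopologicalSpace α] [MeasurableSpace α]
    [SecondCountableTopology α] (ρ : Measure α) : ρ (msupp ρ)ᶜ = 0 := by
  have hset : (msupp ρ)ᶜ = ⋃₀ {U : Set α | IsOpen U ∧ ρ U = 0} := by
    ext p
    simp only [Set.mem_compl_iff, msupp, Set.mem_setOf_eq, Set.mem_sUnion]
    constructor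
    · intro hp
      push_neg at hp
      obtain ⟨U, hU, hpU, hρU⟩ := hp
      exact ⟨U, ⟨hU, le_antisymm hρU zero_le⟩, hpU⟩
    · rintro ⟨U, ⟨hU, hρU⟩, hpU⟩ hcon
      exact (hcon U hU hpU).ne' hρU
  obtain ⟨T, hTc, hTsub, hTeq⟩ := TopologicalSpace.isOpen_sUnion_countable
    {U : Set α | IsOpen U ∧ ρ U = 0} (fun U hU => hU.1)
  rw [hset, ← hTeq, Set.sUnion_eq_biUnion]
  have := hTc.to_subtype
  rw [Set.biUnion_eq_iUnion]
  exact measure_iUnion_null fun U => (hTsub U.2).2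
lemma exists_small_kernel {k m : ℕ} (hk : k < m) (M : Matrix (Fin k) (Fin m) ℝ) :
    ∃ β : Fin m → ℝ, β ≠ 0 ∧ (∀ i, |β i| ≤ 1/2) ∧ ∀ j, ∑ i, β i * M j i = 0 := by
  obtain ⟨β, hβ, hMβ⟩ := exists_mulVec_eq_zero hk M
  set C := ∑ i, |β i| with hC
  have habs : ∀ i, |β i| ≤ C :=
    fun i => Finset.single_le_sum (fun j _ => abs_nonneg (β j)) (Finset.mem_univ i)
  have hCpos : 0 < C := by
    by_contra h
    push_neg at h
    apply hβ
    funext i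
    have h1 : |β i| ≤ 0 := le_trans (habs i) h
    exact abs_eq_zero.mp (le_antisymm h1 (abs_nonneg _))
  refine ⟨fun i => β i / (2*C), ?_, ?_, ?_⟩
  · intro h
    apply hβ
    funext i
    have h2 := congrFun h i
    simp only [Pi.zero_apply, div_eq_zero_iff] at h2
    rcases h2 with h2 | h2
    · exact h2
    · linarith
  · intro i
    have h2C : (0:ℝ) < 2*C := by linarith
    rw [abs_div, abs_of_pos h2C, div_le_iff₀ h2C]
    have := habs i
    linarith
  · intro j
    have hj : ∑ i, M j i * β i = 0 := congrFun hMβ j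
    have h2 : ∑ i, β i / (2*C) * M j i = (∑ i, M j i * β i) / (2*C) := by
      rw [Finset.sum_div]
      exact Finset.sum_congr rfl fun i _ => by ring
    rw [h2, hj, zero_div]
/-- The perturbed measure `ν(1 + Σ wᵢ 1_{Aᵢ})`. -/
noncomputable def pert {Ω : Type*} [MeasurableSpace Ω] (νm : Measure Ω) {m : ℕ}
    (A : Fin m → Set Ω) (w : Fin m → ℝ) : Measure Ω :=
  νm.restrict (⋃ i, A i)ᶜ + ∑ i, ENNReal.ofReal (1 + w i) • νm.restrict (A i)

lemma pert_apply {Ω : Type*} [MeasurableSpace Ω] (νm : Measure Ω) {m : ℕ}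
    (A : Fin m → Set Ω) (w : Fin m → ℝ) {E : Set Ω} (hE : MeasurableSet E) :
    pert νm A w E = νm (E ∩ (⋃ i, A i)ᶜ) + ∑ i, ENNReal.ofReal (1 + w i) * νm (E ∩ A i) := by
  rw [pert, Measure.add_apply, Measure.finset_sum_apply]
  simp only [Measure.smul_apply, smul_eq_mul, Measure.restrict_apply hE]

lemma pert_lintegral {Ω : Type*} [MeasurableSpace Ω] (νm : Measure Ω) {m : ℕ}
    (A : Fin m → Set Ω) (w : Fin m → ℝ) (f : Ω → ENNReal) :
    ∫⁻ p, f p ∂(pert νm A w) =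
      (∫⁻ p in (⋃ i, A i)ᶜ, f p ∂νm) + ∑ i, ENNReal.ofReal (1 + w i) * ∫⁻ p in A i, f p ∂νm := by
  rw [pert, lintegral_add_measure, lintegral_finset_sum_measure]
  simp only [lintegral_smul_measure, smul_eq_mul]

open scoped Classical in
lemma key_perturb {Y : Type*} [MetricSpace Y] [PolishSpace Y] [MeasurableSpace Y] [BorelSpace Y]
    {s : Set Y} {μn : ProbabilityMeasure s} {c : s × s → ℝ} {ε : ℝ}
    {ν : ProbabilityMeasure (s × s)} (hν : IsExtremePt (Gamma μn c ε) ν)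
    {m : ℕ} {A : Fin m → Set (s × s)} (hmeas : ∀ i, MeasurableSet (A i))
    (hdisj : ∀ i j, i ≠ j → Disjoint (A i) (A j)) (hpos : ∀ i, 0 < (ν : Measure (s × s)) (A i))
    {x : Fin m → s} (hfib : ∀ i, A i ⊆ Prod.fst ⁻¹' {x i})
    {β : Fin m → ℝ} (hβ : β ≠ 0) (hhalf : ∀ i, |β i| ≤ 1/2)
    (H1 : ∀ z : s, ∑ i ∈ Finset.univ.filter (fun i => x i = z),
      β i * ((ν : Measure (s × s)) (A i)).toReal = 0)
    (H2 : ∑ i, β i * (∫⁻ p in A i, ENNReal.ofReal (c p) ∂(ν : Measure (s × s))).toReal = 0) :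
    False := by
  set νm := (ν : Measure (s × s)) with hνmdef
  have hAfin : ∀ E : Set (s × s), νm E ≠ ⊤ := fun E => measure_ne_top νm E
  have hUm : MeasurableSet (⋃ i, A i) := MeasurableSet.iUnion hmeas
  -- decomposition of νm over the partition
  have hdecomp : ∀ E : Set (s × s), MeasurableSet E →
      νm E = νm (E ∩ (⋃ i, A i)ᶜ) + ∑ i, νm (E ∩ A i) := by
    intro E hE
    have h1 : νm (E ∩ (⋃ i, A i)) + νm (E \ (⋃ i, A i)) = νm E :=
      measure_inter_add_diff E hUm
    have h2 : νm (E ∩ ⋃ i, A i) = ∑ i, νm (E ∩ A i) := by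
      rw [Set.inter_iUnion, measure_iUnion ?_ (fun i => hE.inter (hmeas i)), tsum_fintype]
      intro i j hij
      exact (hdisj i j hij).mono Set.inter_subset_right Set.inter_subset_right
    rw [← h1, h2, Set.diff_eq, add_comm]
  -- arithmetic lemma
  have hsum_eq : ∀ (w : Fin m → ℝ) (q : Fin m → ENNReal), (∀ i, q i ≠ ⊤) →
      (∀ i, |w i| ≤ 1/2) → (∑ i, w i * (q i).toReal = 0) →
      ∑ i, ENNReal.ofReal (1 + w i) * q i = ∑ i, q i := by
    intro w q hq hw hsum
    have hwn : ∀ i, (0:ℝ) ≤ 1 + w i := fun i => by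
      have := (abs_le.mp (hw i)).1; linarith
    have hne1 : ∀ i ∈ Finset.univ, ENNReal.ofReal (1 + w i) * q i ≠ ⊤ :=
      fun i _ => ENNReal.mul_ne_top ENNReal.ofReal_ne_top (hq i)
    rw [← ENNReal.toReal_eq_toReal_iff' (ENNReal.sum_ne_top.mpr hne1)
      (ENNReal.sum_ne_top.mpr fun i _ => hq i)]
    rw [ENNReal.toReal_sum hne1, ENNReal.toReal_sum (fun i _ => hq i)]
    calc ∑ i, (ENNReal.ofReal (1 + w i) * q i).toReal
        = ∑ i, ((1 + w i) * (q i).toReal) := by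
          refine Finset.sum_congr rfl fun i _ => ?_
          rw [ENNReal.toReal_mul, ENNReal.toReal_ofReal (hwn i)]
      _ = ∑ i, (q i).toReal + ∑ i, w i * (q i).toReal := by
          rw [← Finset.sum_add_distrib]
          exact Finset.sum_congr rfl fun i _ => by ring
      _ = ∑ i, (q i).toReal := by rw [hsum, add_zero]
  -- marginal preservation
  have hmarg : ∀ w : Fin m → ℝ, (∀ i, |w i| ≤ 1/2) →
      (∀ z : s, ∑ i ∈ Finset.univ.filter (fun i => x i = z),
        w i * (νm (A i)).toReal = 0) →
      (pert νm A w).map Prod.fst = νm.map Prod.fst := by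
    intro w hw Hw
    ext B hB
    rw [Measure.map_apply measurable_fst hB, Measure.map_apply measurable_fst hB]
    have hE : MeasurableSet (Prod.fst ⁻¹' B : Set (s × s)) := measurable_fst hB
    have hEA : ∀ i, (Prod.fst ⁻¹' B : Set (s × s)) ∩ A i = if x i ∈ B then A i else ∅ := by
      intro i
      by_cases hxi : x i ∈ B
      · rw [if_pos hxi]
        refine Set.inter_eq_self_of_subset_right fun p hp => ?_
        have h := hfib i hp
        simp only [Set.mem_preimage, Set.mem_singleton_iff] at h
        simp only [Set.mem_preimage, h]
        exact hxi
      · rw [if_neg hxi]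
        ext p
        simp only [Set.mem_inter_iff, Set.mem_empty_iff_false, iff_false, not_and]
        intro hpE hpA
        have h := hfib i hpA
        simp only [Set.mem_preimage, Set.mem_singleton_iff] at h
        simp only [Set.mem_preimage] at hpE
        rw [h] at hpE
        exact hxi hpE
    rw [hdecomp _ hE, pert_apply _ _ _ hE]
    congr 1
    refine hsum_eq w (fun i => νm (Prod.fst ⁻¹' B ∩ A i)) (fun i => hAfin _) hw ?_
    calc ∑ i, w i * (νm (Prod.fst ⁻¹' B ∩ A i)).toReal
        = ∑ i ∈ Finset.univ.filter (fun i => x i ∈ B), w i * (νm (A i)).toReal := by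
          rw [Finset.sum_filter]
          refine Finset.sum_congr rfl fun i _ => ?_
          rw [hEA i]
          split <;> simp
      _ = ∑ z ∈ Finset.univ.image x, ∑ i ∈ (Finset.univ.filter
            (fun i => x i ∈ B)).filter (fun i => x i = z), w i * (νm (A i)).toReal :=
          (Finset.sum_fiberwise_of_maps_to
            (fun i _ => Finset.mem_image_of_mem x (Finset.mem_univ i)) _).symm
      _ = 0 := by
          refine Finset.sum_eq_zero fun z _ => ?_
          by_cases hzB : z ∈ B
          · rw [Finset.filter_filter]
            have hfeq : (Finset.univ.filter (fun i => x i ∈ B ∧ x i = z)) =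
                Finset.univ.filter (fun i => x i = z) := by
              refine Finset.filter_congr fun i _ => ?_
              constructor
              · exact fun h => h.2
              · exact fun h => ⟨by rw [h]; exact hzB, h⟩
            rw [hfeq]
            exact Hw z
          · refine Finset.sum_eq_zero fun i hi => ?_
            rw [Finset.mem_filter, Finset.mem_filter] at hi
            exact absurd (by rw [← hi.2]; exact hi.1.2) hzB
  -- total mass
  have huniv : ∀ w : Fin m → ℝ, (pert νm A w).map Prod.fst = νm.map Prod.fst →
      IsProbabilityMeasure (pert νm A w) := by
    intro w hmap
    constructor
    have h := congrArg (fun μ : Measure s => μ Set.univ) hmap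
    simp only [Measure.map_apply measurable_fst MeasurableSet.univ, Set.preimage_univ] at h
    rw [h]
    exact measure_univ
  -- moment
  have hmom_ne : ∀ i, (∫⁻ p in A i, ENNReal.ofReal (c p) ∂νm) ≠ ⊤ := fun i =>
    ne_top_of_le_ne_top (ne_top_of_le_ne_top ENNReal.ofReal_ne_top hν.1.2)
      (setLIntegral_le_lintegral _ _)
  have hmomint : ∀ w : Fin m → ℝ, (∀ i, |w i| ≤ 1/2) →
      (∑ i, w i * (∫⁻ p in A i, ENNReal.ofReal (c p) ∂νm).toReal = 0) →
      ∫⁻ p, ENNReal.ofReal (c p) ∂(pert νm A w) = ∫⁻ p, ENNReal.ofReal (c p) ∂νm := by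
    intro w hw Hw
    have hre : ∑ i, ∫⁻ p in A i, ENNReal.ofReal (c p) ∂νm
        = ∫⁻ p in ⋃ i, A i, ENNReal.ofReal (c p) ∂νm := by
      rw [lintegral_iUnion hmeas (fun i j hij => hdisj i j hij), tsum_fintype]
    rw [pert_lintegral, hsum_eq w _ hmom_ne hw Hw, hre, add_comm]
    exact lintegral_add_compl _ hUm
  -- hypotheses for -β
  have H1' : ∀ z : s, ∑ i ∈ Finset.univ.filter (fun i => x i = z),
      (-β) i * (νm (A i)).toReal = 0 := by
    intro z
    have := H1 z
    simp only [Pi.neg_apply, neg_mul]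
    rw [Finset.sum_neg_distrib, this, neg_zero]
  have H2' : ∑ i, (-β) i * (∫⁻ p in A i, ENNReal.ofReal (c p) ∂νm).toReal = 0 := by
    simp only [Pi.neg_apply, neg_mul]
    rw [Finset.sum_neg_distrib, H2, neg_zero]
  have hhalf' : ∀ i, |(-β) i| ≤ 1/2 := fun i => by
    simp only [Pi.neg_apply, abs_neg]; exact hhalf i
  have hmarg₁ := hmarg β hhalf H1
  have hmarg₂ := hmarg (-β) hhalf' H1'
  have hprob₁ := huniv β hmarg₁
  have hprob₂ := huniv (-β) hmarg₂
  set ν₁ : ProbabilityMeasure (s × s) := ⟨pert νm A β, hprob₁⟩ with hν₁def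
  set ν₂ : ProbabilityMeasure (s × s) := ⟨pert νm A (-β), hprob₂⟩ with hν₂def
  have hmem₁ : ν₁ ∈ Gamma μn c ε := by
    refine ⟨hmarg₁.trans hν.1.1, ?_⟩
    show ∫⁻ p, ENNReal.ofReal (c p) ∂(pert νm A β) ≤ ENNReal.ofReal ε
    rw [hmomint β hhalf H2]
    exact hν.1.2
  have hmem₂ : ν₂ ∈ Gamma μn c ε := by
    refine ⟨hmarg₂.trans hν.1.1, ?_⟩
    show ∫⁻ p, ENNReal.ofReal (c p) ∂(pert νm A (-β)) ≤ ENNReal.ofReal ε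
    rw [hmomint (-β) hhalf' H2']
    exact hν.1.2
  -- the convex combination identity
  have hconv : νm = (2:ENNReal)⁻¹ • pert νm A β + ((1:ENNReal) - (2:ENNReal)⁻¹) • pert νm A (-β) := by
    rw [ENNReal.one_sub_inv_two]
    ext E hE
    simp only [Measure.add_apply, Measure.smul_apply, smul_eq_mul]
    rw [pert_apply _ _ _ hE, pert_apply _ _ _ hE]
    have hterm : ∀ i ∈ Finset.univ, ENNReal.ofReal (1 + β i) * νm (E ∩ A i) +
        ENNReal.ofReal (1 + (-β) i) * νm (E ∩ A i) = 2 * νm (E ∩ A i) := by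
      intro i _
      have hb := abs_le.mp (hhalf i)
      rw [← add_mul, ← ENNReal.ofReal_add (by linarith [hb.1])
        (by simp only [Pi.neg_apply]; linarith [hb.2])]
      have : 1 + β i + (1 + (-β) i) = 2 := by simp only [Pi.neg_apply]; ring
      rw [this]
      norm_num
    rw [← mul_add, add_add_add_comm, ← Finset.sum_add_distrib,
      Finset.sum_congr rfl hterm, ← Finset.mul_sum, ← two_mul, ← mul_add,
      ← mul_assoc, ENNReal.inv_mul_cancel two_ne_zero ENNReal.ofNat_ne_top, one_mul]
    exact hdecomp E hE
  obtain ⟨e1, -⟩ := hν.2 ν₁ hmem₁ ν₂ hmem₂ (2:ENNReal)⁻¹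
    (ENNReal.inv_pos.mpr ENNReal.ofNat_ne_top) (ENNReal.inv_lt_one.mpr ENNReal.one_lt_two) hconv
  apply hβ
  funext j
  have hj : pert νm A β (A j) = νm (A j) :=
    congrArg (fun μ : ProbabilityMeasure (s × s) => (μ : Measure (s × s)) (A j)) e1
  rw [pert_apply _ _ _ (hmeas j)] at hj
  have h0 : νm (A j ∩ (⋃ i, A i)ᶜ) = 0 := by
    rw [← Set.diff_eq, Set.diff_eq_empty.mpr (Set.subset_iUnion A j), measure_empty]
  rw [h0, zero_add, Finset.sum_eq_single j
    (fun i _ hij => by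
      rw [Set.disjoint_iff_inter_eq_empty.mp (hdisj j i (Ne.symm hij)), measure_empty, mul_zero])
    (fun h => absurd (Finset.mem_univ j) h), Set.inter_self] at hj
  have hone : ENNReal.ofReal (1 + β j) = 1 := by
    have h2 := congrArg (· * (νm (A j))⁻¹) hj
    rwa [mul_assoc, ENNReal.mul_inv_cancel (hpos j).ne' (hAfin _), mul_one] at h2
  rw [← ENNReal.ofReal_one] at hone
  have := (ENNReal.ofReal_eq_ofReal_iff
    (by linarith [(abs_le.mp (hhalf j)).1]) zero_le_one).mp hone
  have : β j = 0 := by linarith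
  simpa using this
open scoped Classical in
/-- A fiber over `z` can be split into two disjoint positive-measure pieces. -/
def SplitFiber {Ω : Type*} [MeasurableSpace Ω] (νm : Measure (Ω × Ω)) (z : Ω) : Prop :=
  ∃ A B : Set (Ω × Ω), MeasurableSet A ∧ MeasurableSet B ∧ Disjoint A B ∧
    A ⊆ Prod.fst ⁻¹' {z} ∧ B ⊆ Prod.fst ⁻¹' {z} ∧ 0 < νm A ∧ 0 < νm B

open scoped Classical in
/-- every extreme point of `Γ` is supported on at most `n+2` points of `X × X`. -/
theorem extremePt_gamma_finitelySupported
    {Y : Type*} [MetricSpace Y] [PolishSpace Y] [MeasurableSpace Y] [BorelSpace Y]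
    (s : Set Y) (hs : MeasurableSet s) (n : ℕ)
    (μn : ProbabilityMeasure s) (hμn : FinitelySupported n (μn : Measure s))
    (c : s × s → ℝ) (hc : ∀ p, 0 ≤ c p) (hlsc : LowerSemicontinuous c)
    (ε : ℝ) (hε : 0 < ε)
    (ν : ProbabilityMeasure (s × s)) (hν : IsExtremePt (Gamma μn c ε) ν) :
    FinitelySupported (n + 2) (ν : Measure (s × s)) := by
  obtain ⟨t, htcard, htnull⟩ := hμn
  have hne : Nonempty ↥s := by
    by_contra h
    rw [not_nonempty_iff] at h
    have h1 : (μn : Measure ↥s) Set.univ = 1 := measure_univ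
    rw [Set.univ_eq_empty_iff.mpr h, measure_empty] at h1
    exact zero_ne_one h1
  set νm := (ν : Measure (↥s × ↥s)) with hνmdef
  have hmarg : νm.map Prod.fst = (μn : Measure ↥s) := hν.1.1
  have htmeas : MeasurableSet (↑t : Set ↥s) := (t : Set ↥s).toFinite.measurableSet
  have hfibnull : νm (Prod.fst ⁻¹' (↑t : Set ↥s)ᶜ) = 0 := by
    rw [← Measure.map_apply measurable_fst htmeas.compl, hmarg]
    exact htnull
  have hFmeas : ∀ z : ↥s, MeasurableSet (Prod.fst ⁻¹' ({z} : Set ↥s) : Set (↥s × ↥s)) :=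
    fun z => measurable_fst (measurableSet_singleton z)
  -- positive measure of open caps around support points of the fiber restriction
  have hposcap : ∀ z : ↥s, ∀ p ∈ msupp (νm.restrict (Prod.fst ⁻¹' {z})),
      ∀ U : Set (↥s × ↥s), IsOpen U → p ∈ U → 0 < νm (U ∩ Prod.fst ⁻¹' {z}) := by
    intro z p hp U hU hpU
    have h2 := hp U hU hpU
    rwa [Measure.restrict_apply' (hFmeas z)] at h2
  -- two support points make a fiber split
  have hsplit2 : ∀ z : ↥s, (∃ p ∈ msupp (νm.restrict (Prod.fst ⁻¹' {z})),
      ∃ q ∈ msupp (νm.restrict (Prod.fst ⁻¹' {z})), p ≠ q) → SplitFiber νm z := by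
    rintro z ⟨p, hp, q, hq, hpq⟩
    have hd : 0 < dist p q := dist_pos.mpr hpq
    refine ⟨Metric.ball p (dist p q / 2) ∩ Prod.fst ⁻¹' {z},
      Metric.ball q (dist p q / 2) ∩ Prod.fst ⁻¹' {z},
      Metric.isOpen_ball.measurableSet.inter (hFmeas z),
      Metric.isOpen_ball.measurableSet.inter (hFmeas z), ?_,
      Set.inter_subset_right, Set.inter_subset_right,
      hposcap z p hp _ Metric.isOpen_ball (Metric.mem_ball_self (by linarith)),
      hposcap z q hq _ Metric.isOpen_ball (Metric.mem_ball_self (by linarith))⟩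
    exact Set.disjoint_of_subset Set.inter_subset_left Set.inter_subset_left
      (Metric.ball_disjoint_ball (by linarith))
  -- no fiber has three support points
  have hC1 : ∀ z : ↥s, ¬ ∃ p ∈ msupp (νm.restrict (Prod.fst ⁻¹' {z})),
      ∃ q ∈ msupp (νm.restrict (Prod.fst ⁻¹' {z})),
      ∃ w ∈ msupp (νm.restrict (Prod.fst ⁻¹' {z})), p ≠ q ∧ p ≠ w ∧ q ≠ w := by
    rintro z ⟨p, hp, q, hq, w, hw, hpq, hpw, hqw⟩
    set D := min (dist p q) (min (dist p w) (dist q w)) with hD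
    have hDpq : D ≤ dist p q := min_le_left _ _
    have hDpw : D ≤ dist p w := le_trans (min_le_right _ _) (min_le_left _ _)
    have hDqw : D ≤ dist q w := le_trans (min_le_right _ _) (min_le_right _ _)
    have hDpos : 0 < D :=
      lt_min (dist_pos.mpr hpq) (lt_min (dist_pos.mpr hpw) (dist_pos.mpr hqw))
    set r := D / 2 with hr
    set pts : Fin 3 → ↥s × ↥s := ![p, q, w] with hpts
    set A : Fin 3 → Set (↥s × ↥s) := fun i => Metric.ball (pts i) r ∩ Prod.fst ⁻¹' {z}
      with hA
    have hmemsupp : ∀ i, pts i ∈ msupp (νm.restrict (Prod.fst ⁻¹' ({z} : Set ↥s))) := by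
      intro i
      fin_cases i <;> simp [hpts] <;> assumption
    have hmeasA : ∀ i, MeasurableSet (A i) :=
      fun i => Metric.isOpen_ball.measurableSet.inter (hFmeas z)
    have hdistpts : ∀ i j : Fin 3, i ≠ j → r + r ≤ dist (pts i) (pts j) := by
      intro i j hij
      fin_cases i <;> fin_cases j <;> simp only [hpts] <;>
        first
          | exact absurd rfl hij
          | (show r + r ≤ dist p q; rw [hr]; linarith)
          | (show r + r ≤ dist p w; rw [hr]; linarith)
          | (show r + r ≤ dist q w; rw [hr]; linarith)
          | (show r + r ≤ dist q p; rw [dist_comm, hr]; linarith)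
          | (show r + r ≤ dist w p; rw [dist_comm, hr]; linarith)
          | (show r + r ≤ dist w q; rw [dist_comm, hr]; linarith)
    have hdisjA : ∀ i j : Fin 3, i ≠ j → Disjoint (A i) (A j) := by
      intro i j hij
      exact Set.disjoint_of_subset Set.inter_subset_left Set.inter_subset_left
        (Metric.ball_disjoint_ball (hdistpts i j hij))
    have hposA : ∀ i, 0 < νm (A i) :=
      fun i => hposcap z (pts i) (hmemsupp i) _ Metric.isOpen_ball
        (Metric.mem_ball_self (by rw [hr]; linarith))
    obtain ⟨β, hβ, hhalf, hrows⟩ := exists_small_kernel (show 2 < 3 by norm_num)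
      ![fun i => (νm (A i)).toReal,
        fun i => (∫⁻ p in A i, ENNReal.ofReal (c p) ∂νm).toReal]
    refine key_perturb hν hmeasA hdisjA hposA
      (x := fun _ => z) (fun i => Set.inter_subset_right) hβ hhalf ?_ ?_
    · intro z'
      by_cases hz' : z = z'
      · rw [Finset.filter_true_of_mem (fun i _ => hz')]
        have h0 := hrows 0
        simpa only [Matrix.cons_val_zero] using h0
      · rw [Finset.filter_false_of_mem (fun i _ => hz'), Finset.sum_empty]
    · have h1 := hrows 1
      simpa only [Matrix.cons_val_one, Matrix.head_cons, Matrix.cons_val_zero] using h1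
  -- at most one fiber splits
  have hC2 : ∀ z1 z2 : ↥s, z1 ≠ z2 → SplitFiber νm z1 → SplitFiber νm z2 → False := by
    rintro z1 z2 hz12 ⟨A0, A1, hm0, hm1, hd01, hf0, hf1, hp0, hp1⟩
      ⟨A2, A3, hm2, hm3, hd23, hf2, hf3, hp2, hp3⟩
    have hFdisj : Disjoint (Prod.fst ⁻¹' ({z1} : Set ↥s) : Set (↥s × ↥s))
        (Prod.fst ⁻¹' ({z2} : Set ↥s)) := by
      rw [Set.disjoint_left]
      intro p hp1' hp2'
      simp only [Set.mem_preimage, Set.mem_singleton_iff] at hp1' hp2'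
      exact hz12 (hp1'.symm.trans hp2')
    set A : Fin 4 → Set (↥s × ↥s) := ![A0, A1, A2, A3] with hA
    set x : Fin 4 → ↥s := ![z1, z1, z2, z2] with hx
    have hmeasA : ∀ i, MeasurableSet (A i) := by
      intro i
      fin_cases i <;> simpa only [hA, Matrix.cons_val_zero, Matrix.cons_val_one,
        Matrix.head_cons, Matrix.cons_val_two, Matrix.tail_cons, Matrix.cons_val_three]
        using (by assumption : MeasurableSet _)
    have hfibA : ∀ i, A i ⊆ Prod.fst ⁻¹' ({x i} : Set ↥s) := by
      intro i
      fin_cases i <;>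
        simp only [hA, hx, Matrix.cons_val_zero, Matrix.cons_val_one, Matrix.head_cons,
          Matrix.cons_val_two, Matrix.tail_cons, Matrix.cons_val_three] <;>
        assumption
    have hdisjA : ∀ i j : Fin 4, i ≠ j → Disjoint (A i) (A j) := by
      have hd02 : Disjoint A0 A2 := Set.disjoint_of_subset hf0 hf2 hFdisj
      have hd03 : Disjoint A0 A3 := Set.disjoint_of_subset hf0 hf3 hFdisj
      have hd12 : Disjoint A1 A2 := Set.disjoint_of_subset hf1 hf2 hFdisj
      have hd13 : Disjoint A1 A3 := Set.disjoint_of_subset hf1 hf3 hFdisj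
      intro i j hij
      fin_cases i <;> fin_cases j <;>
        simp only [hA, Matrix.cons_val_zero, Matrix.cons_val_one, Matrix.head_cons,
          Matrix.cons_val_two, Matrix.tail_cons, Matrix.cons_val_three] at hij ⊢ <;>
        first
          | exact absurd rfl hij
          | assumption
          | exact hd01.symm
          | exact hd23.symm
          | exact hd02.symm
          | exact hd03.symm
          | exact hd12.symm
          | exact hd13.symm
    have hposA : ∀ i, 0 < νm (A i) := by
      intro i
      fin_cases i <;>
        simp only [hA, Matrix.cons_val_zero, Matrix.cons_val_one, Matrix.head_cons,
          Matrix.cons_val_two, Matrix.tail_cons, Matrix.cons_val_three] <;>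
        assumption
    obtain ⟨β, hβ, hhalf, hrows⟩ := exists_small_kernel (show 3 < 4 by norm_num)
      ![![(νm A0).toReal, (νm A1).toReal, 0, 0],
        ![0, 0, (νm A2).toReal, (νm A3).toReal],
        ![(∫⁻ p in A0, ENNReal.ofReal (c p) ∂νm).toReal,
          (∫⁻ p in A1, ENNReal.ofReal (c p) ∂νm).toReal,
          (∫⁻ p in A2, ENNReal.ofReal (c p) ∂νm).toReal,
          (∫⁻ p in A3, ENNReal.ofReal (c p) ∂νm).toReal]]
    have hr0 : β 0 * (νm A0).toReal + β 1 * (νm A1).toReal = 0 := by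
      have h0 := hrows 0
      simp only [Fin.sum_univ_four, Matrix.cons_val_zero, Matrix.cons_val_one,
        Matrix.head_cons, Matrix.cons_val_two, Matrix.tail_cons, Matrix.cons_val_three,
        mul_zero, add_zero] at h0
      linarith
    have hr1 : β 2 * (νm A2).toReal + β 3 * (νm A3).toReal = 0 := by
      have h1 := hrows 1
      simp only [Fin.sum_univ_four, Matrix.cons_val_zero, Matrix.cons_val_one,
        Matrix.head_cons, Matrix.cons_val_two, Matrix.tail_cons, Matrix.cons_val_three,
        mul_zero, zero_add] at h1
      linarith
    refine key_perturb hν hmeasA hdisjA hposA hfibA hβ hhalf ?_ ?_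
    · intro z'
      rw [Finset.sum_filter, Fin.sum_univ_four]
      have hx0 : x 0 = z1 := rfl
      have hx1 : x 1 = z1 := rfl
      have hx2 : x 2 = z2 := rfl
      have hx3 : x 3 = z2 := rfl
      have hA0 : A 0 = A0 := rfl
      have hA1 : A 1 = A1 := rfl
      have hA2 : A 2 = A2 := rfl
      have hA3 : A 3 = A3 := rfl
      rw [hx0, hx1, hx2, hx3, hA0, hA1, hA2, hA3]
      by_cases h1 : z1 = z'
      · by_cases h2 : z2 = z'
        · exact absurd (h1.trans h2.symm) hz12
        · rw [if_pos h1, if_pos h1, if_neg h2, if_neg h2]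
          rw [← h1] at *
          simpa using hr0
      · by_cases h2 : z2 = z'
        · rw [if_neg h1, if_neg h1, if_pos h2, if_pos h2]
          simpa using hr1
        · rw [if_neg h1, if_neg h1, if_neg h2, if_neg h2]
          simp
    · have h2 := hrows 2
      simp only [Fin.sum_univ_four, Matrix.cons_val_zero, Matrix.cons_val_one,
        Matrix.head_cons, Matrix.cons_val_two, Matrix.tail_cons, Matrix.cons_val_three] at h2 ⊢
      have hA0 : A 0 = A0 := rfl
      have hA1 : A 1 = A1 := rfl
      have hA2 : A 2 = A2 := rfl
      have hA3 : A 3 = A3 := rfl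
      rw [hA0, hA1, hA2, hA3]
      exact h2
  -- each non-split fiber support is a single point
  have hcover1 : ∀ z : ↥s, ¬ SplitFiber νm z →
      ∃ a : ↥s × ↥s, msupp (νm.restrict (Prod.fst ⁻¹' {z})) ⊆ {a} := by
    intro z hz
    apply subset_single
    rintro ⟨p, hp, q, hq, hpq⟩
    exact hz (hsplit2 z ⟨p, hp, q, hq, hpq⟩)
  have hgex : ∀ z : ↥s, ∃ a : ↥s × ↥s, ¬ SplitFiber νm z →
      msupp (νm.restrict (Prod.fst ⁻¹' {z})) ⊆ {a} := by
    intro z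
    by_cases hz : SplitFiber νm z
    · exact ⟨Classical.arbitrary _, fun h => absurd hz h⟩
    · obtain ⟨a, ha⟩ := hcover1 z hz
      exact ⟨a, fun _ => ha⟩
  choose g hg using hgex
  -- a finite set covering all fiber supports gives the null complement
  have hnull : ∀ T : Finset (↥s × ↥s),
      (∀ z ∈ t, msupp (νm.restrict (Prod.fst ⁻¹' {z})) ⊆ ↑T) → νm ((↑T : Set (↥s × ↥s))ᶜ) = 0 := by
    intro T hT
    have hsub : ((↑T : Set (↥s × ↥s))ᶜ : Set (↥s × ↥s)) ⊆
        (Prod.fst ⁻¹' (↑t : Set ↥s)ᶜ) ∪ ⋃ z ∈ t, ((↑T : Set (↥s × ↥s))ᶜ ∩ Prod.fst ⁻¹' {z}) := by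
      intro p hp
      by_cases hp1 : p.1 ∈ t
      · right
        exact Set.mem_biUnion hp1 ⟨hp, rfl⟩
      · left
        exact hp1
    refine le_antisymm (le_trans (measure_mono hsub) ?_) zero_le
    refine le_trans (measure_union_le _ _) ?_
    rw [hfibnull, zero_add]
    refine le_trans (measure_biUnion_finset_le t _) ?_
    refine le_of_eq (Finset.sum_eq_zero fun z hz => ?_)
    rw [← Measure.restrict_apply' (hFmeas z)]
    refine le_antisymm (le_trans (measure_mono (Set.compl_subset_compl.mpr (hT z hz))) ?_)
      zero_le
    rw [measure_compl_msupp]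
  -- case analysis on the existence of a split fiber
  by_cases hex : ∃ z0 ∈ t, SplitFiber νm z0
  · obtain ⟨z0, hz0t, hz0⟩ := hex
    obtain ⟨a, b, hab⟩ := subset_pair (hC1 z0)
    refine ⟨{a, b} ∪ t.image g, ?_, hnull _ ?_⟩
    · refine le_trans (Finset.card_union_le _ _) ?_
      have h1 : ({a, b} : Finset (↥s × ↥s)).card ≤ 2 :=
        le_trans (Finset.card_insert_le _ _) (by simp)
      have h2 : (t.image g).card ≤ n := le_trans (Finset.card_image_le) htcard
      omega
    · intro z hz
      by_cases hzz0 : z = z0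
      · subst hzz0
        refine hab.trans ?_
        intro u hu
        have hab2 : u = a ∨ u = b := by simpa using hu
        rcases hab2 with h | h <;> subst h <;> simp
      · have hns : ¬ SplitFiber νm z := fun h => hC2 z z0 hzz0 h hz0
        refine (hg z hns).trans ?_
        intro u hu
        rw [Set.mem_singleton_iff] at hu
        subst hu
        simp only [Finset.coe_union, Set.mem_union, Finset.mem_coe, Finset.coe_image]
        right
        exact ⟨z, hz, rfl⟩
  · push_neg at hex
    refine ⟨t.image g, le_trans (Finset.card_image_le) (by omega), hnull _ ?_⟩
    intro z hz
    refine (hg z (hex z hz)).trans ?_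
    intro u hu
    rw [Set.mem_singleton_iff] at hu
    subst hu
    simp only [Finset.coe_image]
    exact ⟨z, hz, rfl⟩
end

section
/- Let X be a Borel subset of a Polish metric space with the Prokhorov metric on 𝓜(X). For n ∈ ℕ, ε > 0 and μₙ a probability measure supported on at most n points, every extreme point of the closed Prokhorov ball B_ε(μₙ) = {μ ∈ 𝓜(X) : d_Pr(μ, μₙ) ≤ ε} is supported on at most n+2 points. -/
open MeasureTheory

/-- The Prokhorov distance
`d_Pr(μ₁,μ₂) = inf {ε > 0 : μ₁(A) ≤ μ₂(Aᵉ) + ε for all Borel A}`. -/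
noncomputable def prokDist {X : Type*} [MetricSpace X] [MeasurableSpace X]
    (μ₁ μ₂ : Measure X) : ℝ :=
  sInf {ε : ℝ | 0 < ε ∧ ∀ A : Set X, MeasurableSet A →
    μ₁ A ≤ μ₂ (Metric.thickening ε A) + ENNReal.ofReal ε}

open ENNReal



section Gset
variable {Ω : Type*} [MetricSpace Ω] [MeasurableSpace Ω] [BorelSpace Ω]

/-- the set of points farther than ε from every point of `t \ S`. -/
def Gset (t S : Finset Ω) (ε : ℝ) : Set Ω := {y | ∀ x ∈ t, x ∉ S → ε < dist y x}

lemma measurableSet_Gset (t S : Finset Ω) (ε : ℝ) : MeasurableSet (Gset t S ε) := by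
  have : Gset t S ε = ⋂ x ∈ t, ⋂ (_ : x ∉ S), {y | ε < dist y x} := by
    ext y; simp [Gset]
  rw [this]
  refine MeasurableSet.biInter t.countable_toSet fun x _ => MeasurableSet.iInter fun _ => ?_
  exact (isOpen_lt continuous_const ((continuous_id.dist continuous_const))).measurableSet

variable (t : Finset Ω) {μn' ν : Measure Ω} {ε : ℝ}

/-- direction (b): the finitely many constraints imply ball membership. -/
lemma mem_ball_of_forall [IsProbabilityMeasure ν] (hε : 0 < ε)
    (h : ∀ S ⊆ t, ν (Gset t S ε) ≤ μn' (↑S) + ENNReal.ofReal ε) :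
    prokDist ν μn' ≤ ε := by
  classical
  set P := {ε' : ℝ | 0 < ε' ∧ ∀ A : Set Ω, MeasurableSet A →
    ν A ≤ μn' (Metric.thickening ε' A) + ENNReal.ofReal ε'} with hP
  have hbdd : BddBelow P := ⟨0, fun x hx => le_of_lt hx.1⟩
  have hmem : ∀ δ, ε < δ → δ ∈ P := by
    intro δ hδ
    refine ⟨hε.trans hδ, fun A hA => ?_⟩
    set S := t.filter (fun x => x ∈ Metric.thickening δ A) with hS
    have hSt : S ⊆ t := Finset.filter_subset _ _
    have hAG : A ⊆ Gset t S ε := by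
      intro y hy x hxt hxS
      by_contra hc
      push_neg at hc
      exact hxS (Finset.mem_filter.2 ⟨hxt, Metric.mem_thickening_iff.2
        ⟨y, hy, lt_of_le_of_lt (by simpa [dist_comm] using hc) hδ⟩⟩)
    calc ν A ≤ ν (Gset t S ε) := measure_mono hAG
      _ ≤ μn' (↑S) + ENNReal.ofReal ε := h S hSt
      _ ≤ μn' (Metric.thickening δ A) + ENNReal.ofReal δ := by
          refine add_le_add (measure_mono ?_) (ENNReal.ofReal_le_ofReal (le_of_lt hδ))
          intro x hx
          exact (Finset.mem_filter.1 (by exact_mod_cast hx)).2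
  have hPd : prokDist ν μn' = sInf P := rfl
  rw [hPd]
  by_contra hc
  push_neg at hc
  have h1 : sInf P ≤ (ε + sInf P)/2 := csInf_le hbdd (hmem _ (by linarith))
  linarith

/-- from ball membership, constraint at every radius `δ > ε`. -/
lemma step_delta [IsProbabilityMeasure ν] (hε : 0 < ε) (hball : prokDist ν μn' ≤ ε) :
    ∀ δ, ε < δ → ∀ A : Set Ω, MeasurableSet A →
      ν A ≤ μn' (Metric.thickening δ A) + ENNReal.ofReal δ := by
  intro δ hδ A hA
  set P := {ε' : ℝ | 0 < ε' ∧ ∀ A : Set Ω, MeasurableSet A →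
    ν A ≤ μn' (Metric.thickening ε' A) + ENNReal.ofReal ε'} with hP
  have hPr : (1 + ε) ∈ P := by
    refine ⟨by linarith, fun B hB => ?_⟩
    have h1 : ν B ≤ 1 := prob_le_one
    have h2 : (1:ℝ≥0∞) ≤ ENNReal.ofReal (1 + ε) := by
      rw [show (1:ℝ≥0∞) = ENNReal.ofReal 1 by simp]
      exact ENNReal.ofReal_le_ofReal (by linarith)
    exact le_trans (le_trans h1 h2) (self_le_add_left _ _)
  have hPd : prokDist ν μn' = sInf P := rfl
  rw [hPd] at hball
  have hlt : sInf P < δ := lt_of_le_of_lt hball hδ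
  obtain ⟨x, hxP, hxδ⟩ := exists_lt_of_csInf_lt ⟨_, hPr⟩ hlt
  calc ν A ≤ μn' (Metric.thickening x A) + ENNReal.ofReal x := hxP.2 A hA
    _ ≤ μn' (Metric.thickening δ A) + ENNReal.ofReal δ := by
        exact add_le_add (measure_mono (Metric.thickening_mono (le_of_lt hxδ) A))
          (ENNReal.ofReal_le_ofReal (le_of_lt hxδ))
set_option linter.unusedSectionVars false

lemma constraint_of_mem_ball [IsProbabilityMeasure ν] [IsFiniteMeasure μn'] (hε : 0 < ε)
    (hμnt : μn' ((↑t : Set Ω)ᶜ) = 0) (hball : prokDist ν μn' ≤ ε) :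
    ∀ S ⊆ t, ν (Gset t S ε) ≤ μn' ↑S + ENNReal.ofReal ε := by
  classical
  intro S hS
  set F : ℕ → Set Ω := fun k => {y | ∀ x ∈ t, x ∉ S → ε + ((k:ℝ)+1)⁻¹ ≤ dist y x} with hF
  have hFmeas : ∀ k, MeasurableSet (F k) := by
    intro k
    have : F k = ⋂ x ∈ t, ⋂ (_ : x ∉ S), {y | ε + ((k:ℝ)+1)⁻¹ ≤ dist y x} := by
      ext y; simp [hF]
    rw [this]
    refine MeasurableSet.biInter t.countable_toSet fun x _ => MeasurableSet.iInter fun _ => ?_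
    exact (isClosed_le continuous_const (continuous_id.dist continuous_const)).measurableSet
  have hFmono : Monotone F := by
    intro k l hkl y hy x hxt hxS
    refine le_trans ?_ (hy x hxt hxS)
    have : ((l:ℝ)+1)⁻¹ ≤ ((k:ℝ)+1)⁻¹ := by
      apply inv_anti₀ (by positivity)
      exact_mod_cast add_le_add_left (Nat.cast_le.2 hkl) 1
    linarith
  have hunion : Gset t S ε = ⋃ k, F k := by
    apply Set.Subset.antisymm
    · intro y hy
      by_cases hQ : (t.filter (fun x => x ∉ S)).Nonempty
      · set m := (t.filter (fun x => x ∉ S)).inf' hQ (fun x => dist y x) with hm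
        have hεm : ε < m := by
          rw [hm, Finset.lt_inf'_iff]
          intro x hx
          rcases Finset.mem_filter.1 hx with ⟨hxt, hxS⟩
          exact hy x hxt hxS
        obtain ⟨k, hk⟩ := exists_nat_gt (m - ε)⁻¹
        have hk1 : (m - ε)⁻¹ < (k:ℝ) + 1 := by linarith
        have hkinv : ((k:ℝ)+1)⁻¹ ≤ m - ε := by
          rw [inv_le_comm₀ (by positivity) (by linarith)]
          exact le_of_lt hk1
        refine Set.mem_iUnion.2 ⟨k, fun x hxt hxS => ?_⟩
        have : m ≤ dist y x := Finset.inf'_le _ (Finset.mem_filter.2 ⟨hxt, hxS⟩)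
        linarith
      · refine Set.mem_iUnion.2 ⟨0, fun x hxt hxS => ?_⟩
        exact absurd ⟨x, Finset.mem_filter.2 ⟨hxt, hxS⟩⟩ hQ
    · refine Set.iUnion_subset fun k y hy x hxt hxS => ?_
      have h1 : ε + ((k:ℝ)+1)⁻¹ ≤ dist y x := hy x hxt hxS
      have : (0:ℝ) < ((k:ℝ)+1)⁻¹ := by positivity
      linarith
  have hbound : ∀ k, ν (F k) ≤ μn' ↑S + ENNReal.ofReal ε := by
    intro k
    refine ENNReal.le_of_forall_pos_le_add fun η hη hfin => ?_
    set r : ℝ := min (((k:ℝ)+1)⁻¹/2) ((η:ℝ)/2) with hr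
    have hkpos : (0:ℝ) < ((k:ℝ)+1)⁻¹ := by positivity
    have hηpos : (0:ℝ) < (η:ℝ) := hη
    have hr0 : 0 < r := lt_min (by positivity) (by positivity)
    have key := step_delta hε hball (ε + r) (by linarith) (F k) (hFmeas k)
    have hsub : Metric.thickening (ε+r) (F k) ⊆ ↑S ∪ (↑t : Set Ω)ᶜ := by
      intro x hx
      rcases Metric.mem_thickening_iff.1 hx with ⟨y, hyF, hdist⟩
      by_cases hxt : x ∈ t
      · left
        by_contra hxS
        have h1 : ε + ((k:ℝ)+1)⁻¹ ≤ dist y x := hyF x hxt hxS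
        have h2 : r ≤ ((k:ℝ)+1)⁻¹/2 := min_le_left _ _
        rw [dist_comm] at hdist
        linarith
      · right; simpa using hxt
    have hμnle : μn' (Metric.thickening (ε+r) (F k)) ≤ μn' ↑S := by
      calc μn' (Metric.thickening (ε+r) (F k)) ≤ μn' (↑S ∪ (↑t : Set Ω)ᶜ) := measure_mono hsub
        _ ≤ μn' ↑S + μn' ((↑t : Set Ω)ᶜ) := measure_union_le _ _
        _ = μn' ↑S := by rw [hμnt, add_zero]
    have hofr : ENNReal.ofReal (ε + r) ≤ ENNReal.ofReal ε + (η:ℝ≥0∞) := by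
      rw [ENNReal.ofReal_add (le_of_lt hε) (le_of_lt hr0)]
      refine add_le_add_right ?_ _
      calc ENNReal.ofReal r ≤ ENNReal.ofReal (η:ℝ) := ENNReal.ofReal_le_ofReal
            (le_trans (min_le_right _ _) (by linarith))
        _ = (η:ℝ≥0∞) := ENNReal.ofReal_coe_nnreal
    calc ν (F k) ≤ μn' (Metric.thickening (ε+r) (F k)) + ENNReal.ofReal (ε+r) := key
      _ ≤ μn' ↑S + (ENNReal.ofReal ε + (η:ℝ≥0∞)) := add_le_add hμnle hofr
      _ = μn' ↑S + ENNReal.ofReal ε + (η:ℝ≥0∞) := by ring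
  rw [hunion, (hFmono.directed_le).measure_iUnion]
  exact iSup_le hbound


end Gset
section Split
variable {Ω : Type*} [MetricSpace Ω] [MeasurableSpace Ω] [BorelSpace Ω]

lemma split_lemma (μn μ : ProbabilityMeasure Ω) (t : Finset Ω)
    (hμnt : (μn : Measure Ω) ((↑t : Set Ω)ᶜ) = 0)
    {ε : ℝ} (hε : 0 < ε)
    (hext : IsExtremePt
      {μ' : ProbabilityMeasure Ω | prokDist (μ' : Measure Ω) (μn : Measure Ω) ≤ ε} μ)
    (B₁ B₂ : Set Ω) (hmes1 : MeasurableSet B₁) (hmes2 : MeasurableSet B₂)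
    (hd : Disjoint B₁ B₂)
    (ha : (μ : Measure Ω) B₁ ≠ 0) (hb : (μ : Measure Ω) B₂ ≠ 0)
    (hkey : ∀ S ∈ t.powerset,
      (μ : Measure Ω) (Gset t S ε) = (μn : Measure Ω) ↑S + ENNReal.ofReal ε →
      (μ : Measure Ω) B₂ * (μ : Measure Ω) (Gset t S ε ∩ B₁)
        = (μ : Measure Ω) B₁ * (μ : Measure Ω) (Gset t S ε ∩ B₂)) : False := by
  classical
  set m : Measure Ω := (μ : Measure Ω) with hmdef
  have hL1 : ∀ S ⊆ t, m (Gset t S ε) ≤ (μn : Measure Ω) ↑S + ENNReal.ofReal ε :=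
    constraint_of_mem_ball t hε hμnt (hext.1 : prokDist (μ : Measure Ω) (μn : Measure Ω) ≤ ε)
  -- the constant c
  set I := t.powerset.filter
    (fun S => m (Gset t S ε) ≠ (μn : Measure Ω) ↑S + ENNReal.ofReal ε) with hI
  set W : Finset ℝ≥0∞ := insert (min (m B₁) (m B₂))
    (I.image fun S : Finset Ω => ((μn : Measure Ω) (↑S : Set Ω) + ENNReal.ofReal ε) - m (Gset t S ε)) with hW
  have hWne : W.Nonempty := ⟨_, Finset.mem_insert_self _ _⟩
  set E := W.min' hWne with hE
  have hE0 : E ≠ 0 := by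
    have hmem := Finset.min'_mem W hWne
    rw [← hE] at hmem
    rw [hW] at hmem
    rcases Finset.mem_insert.1 hmem with h | h
    · rcases min_choice (m B₁) (m B₂) with h' | h' <;> rw [h, h']
      · exact ha
      · exact hb
    · rcases Finset.mem_image.1 h with ⟨S, hSI, hSe⟩
      rcases Finset.mem_filter.1 hSI with ⟨hSp, hSne⟩
      rw [← hSe]
      intro h0
      exact hSne (le_antisymm (hL1 S (Finset.mem_powerset.1 hSp)) (tsub_eq_zero_iff_le.1 h0))
  set c := E / 2 with hc
  have hc0 : c ≠ 0 := by
    rw [hc]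
    simp [ENNReal.div_eq_zero_iff, hE0]
  have hEa : E ≤ min (m B₁) (m B₂) := Finset.min'_le _ _ (Finset.mem_insert_self _ _)
  have hca : c ≤ m B₁ :=
    le_trans (le_trans ENNReal.half_le_self hEa) (min_le_left _ _)
  have hcb : c ≤ m B₂ :=
    le_trans (le_trans ENNReal.half_le_self hEa) (min_le_right _ _)
  have hcT : c ≠ ⊤ := fun h => (measure_ne_top m B₁) (top_le_iff.1 (h ▸ hca))
  have hslack : ∀ S ∈ I, c ≤ ((μn : Measure Ω) ↑S + ENNReal.ofReal ε) - m (Gset t S ε) := by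
    intro S hSI
    refine le_trans ENNReal.half_le_self (Finset.min'_le _ _ ?_)
    rw [hW]
    exact Finset.mem_insert_of_mem (Finset.mem_image_of_mem _ hSI)
  -- the generic perturbed measure
  set gen : Set Ω → Set Ω → Measure Ω := fun B C =>
    m.restrict (B ∪ C)ᶜ + (1 + c / m B) • m.restrict B + (1 - c / m C) • m.restrict C
    with hgen
  have heval : ∀ (B C : Set Ω), MeasurableSet B → MeasurableSet C →
      ∀ Es : Set Ω, MeasurableSet Es →
      gen B C Es = m (Es ∩ (B ∪ C)ᶜ) + (1 + c / m B) * m (Es ∩ B)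
        + (1 - c / m C) * m (Es ∩ C) := by
    intro B C hB hC Es hEs
    rw [hgen]
    simp [Measure.restrict_apply hEs, smul_eq_mul]
  -- generic facts, for (B, C) an ordered pair of disjoint positive-measure sets
  have hgenfacts : ∀ (B C : Set Ω), MeasurableSet B → MeasurableSet C → Disjoint B C →
      m B ≠ 0 → m C ≠ 0 → c ≤ m C →
      ((1 + c / m B) * m B = m B + c ∧ (1 - c / m C) * m C = m C - c) := by
    intro B C hB hC hdj hB0 hC0 hcC
    constructor
    · rw [add_mul, one_mul, ENNReal.div_mul_cancel hB0 (measure_ne_top m B)]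
    · rw [ENNReal.sub_mul (fun _ _ => measure_ne_top m C), one_mul,
        ENNReal.div_mul_cancel hC0 (measure_ne_top m C)]
  -- probability
  have hprob : ∀ (B C : Set Ω), MeasurableSet B → MeasurableSet C → Disjoint B C →
      m B ≠ 0 → m C ≠ 0 → c ≤ m C → IsProbabilityMeasure (gen B C) := by
    intro B C hB hC hdj hB0 hC0 hcC
    obtain ⟨e1, e2⟩ := hgenfacts B C hB hC hdj hB0 hC0 hcC
    constructor
    rw [heval B C hB hC Set.univ MeasurableSet.univ]
    simp only [Set.univ_inter]
    rw [e1, e2]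
    have h4 : m B + c + (m C - c) = m B + m C := by
      rw [add_assoc, add_tsub_cancel_of_le hcC]
    rw [add_assoc, h4, ← measure_union hdj hC, add_comm,
      measure_add_measure_compl (hB.union hC), measure_univ]
  -- ball constraints for the perturbed measure
  have hballgen : ∀ (B C : Set Ω), MeasurableSet B → MeasurableSet C → Disjoint B C →
      m B ≠ 0 → m C ≠ 0 → c ≤ m C →
      (∀ S ∈ t.powerset, m (Gset t S ε) = (μn : Measure Ω) ↑S + ENNReal.ofReal ε →
        m C * m (Gset t S ε ∩ B) = m B * m (Gset t S ε ∩ C)) →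
      ∀ S ⊆ t, gen B C (Gset t S ε) ≤ (μn : Measure Ω) ↑S + ENNReal.ofReal ε := by
    intro B C hB hC hdj hB0 hC0 hcC hk S hS
    set GS := Gset t S ε with hGSdef
    have hGme : MeasurableSet GS := measurableSet_Gset t S ε
    set u := m (GS ∩ B) with hu
    set v := m (GS ∩ C) with hv
    set w := m (GS ∩ (B ∪ C)ᶜ) with hw
    have hsplit : m GS = w + u + v := by
      have h1 : m (GS ∩ (B ∪ C)) + m (GS \ (B ∪ C)) = m GS :=
        measure_inter_add_diff GS (hB.union hC)
      have h2 : GS ∩ (B ∪ C) = (GS ∩ B) ∪ (GS ∩ C) := Set.inter_union_distrib_left _ _ _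
      have h3 : m (GS ∩ (B ∪ C)) = u + v := by
        rw [h2]
        exact measure_union (hdj.mono Set.inter_subset_right Set.inter_subset_right)
          (hGme.inter hC)
      rw [← h1, h3, Set.diff_eq, ← hw]
      ring
    have heval' := heval B C hB hC GS hGme
    have e1 : (1 + c / m B) * u = u + (c / m B) * u := by rw [add_mul, one_mul]
    have e2 : (1 - c / m C) * v = v - (c / m C) * v := by
      rw [ENNReal.sub_mul (fun _ _ => (by rw [hv]; exact measure_ne_top m _)), one_mul]
    have hXc : (c / m B) * u ≤ c := by
      calc (c / m B) * u ≤ (c / m B) * m B :=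
            mul_le_mul_right (by rw [hu]; exact measure_mono Set.inter_subset_right) _
        _ = c := ENNReal.div_mul_cancel hB0 (measure_ne_top m B)
    have hdiv1 : c / m C ≤ 1 := by
      rw [ENNReal.div_le_iff hC0 (measure_ne_top m C), one_mul]; exact hcC
    have hYv : (c / m C) * v ≤ v := by
      calc (c / m C) * v ≤ 1 * v := mul_le_mul_left hdiv1 _
        _ = v := one_mul v
    by_cases hact : m GS = (μn : Measure Ω) ↑S + ENNReal.ofReal ε
    · have hk' := hk S (Finset.mem_powerset.2 hS) hact
      have hXY : (c / m B) * u = (c / m C) * v := by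
        have h1 : (c / m B) * u = c * u / m B := by
          rw [div_eq_mul_inv, div_eq_mul_inv, mul_right_comm]
        have h2 : (c / m C) * v = c * v / m C := by
          rw [div_eq_mul_inv, div_eq_mul_inv, mul_right_comm]
        have h3 : c * u / m B = c * v / m C := by
          rw [← ENNReal.mul_div_mul_right (c*u) (m B) hC0 (measure_ne_top m C),
              ← ENNReal.mul_div_mul_left (c*v) (m C) hB0 (measure_ne_top m B)]
          congr 1
          calc c * u * m C = c * (m C * u) := by ring
            _ = c * (m B * v) := by rw [hk']
            _ = m B * (c * v) := by ring
        rw [h1, h2, h3]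
      rw [heval', e1, e2, hXY]
      calc w + (u + (c / m C) * v) + (v - (c / m C) * v)
          = (w + u) + ((c / m C) * v + (v - (c / m C) * v)) := by
            rw [← add_assoc w u ((c / m C) * v), add_assoc (w+u) ((c / m C) * v) _]
        _ = (w + u) + v := by rw [add_tsub_cancel_of_le hYv]
        _ = m GS := by rw [hsplit, add_assoc]
        _ ≤ (μn : Measure Ω) ↑S + ENNReal.ofReal ε := le_of_eq hact
    · have hSI : S ∈ I := by
        rw [hI]
        exact Finset.mem_filter.2 ⟨Finset.mem_powerset.2 hS, hact⟩
      have hcs := hslack S hSI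
      calc gen B C GS = w + (u + (c / m B) * u) + (v - (c / m C) * v) := by
            rw [heval', e1, e2]
        _ ≤ w + (u + c) + v := by
            exact add_le_add (add_le_add le_rfl (add_le_add le_rfl hXc)) tsub_le_self
        _ = (w + u + v) + c := by ring
        _ = m GS + c := by rw [hsplit]
        _ ≤ m GS + (((μn : Measure Ω) ↑S + ENNReal.ofReal ε) - m GS) :=
            add_le_add_right hcs _
        _ = (μn : Measure Ω) ↑S + ENNReal.ofReal ε := add_tsub_cancel_of_le (hL1 S hS)
  -- value of the perturbed measure on B
  have hgenB : ∀ (B C : Set Ω), MeasurableSet B → MeasurableSet C → Disjoint B C →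
      m B ≠ 0 → m C ≠ 0 → c ≤ m C → gen B C B = m B + c := by
    intro B C hB hC hdj hB0 hC0 hcC
    rw [heval B C hB hC B hB]
    have h1 : B ∩ (B ∪ C)ᶜ = ∅ := by
      ext x
      simp only [Set.mem_inter_iff, Set.mem_compl_iff, Set.mem_union, Set.mem_empty_iff_false,
        iff_false, not_and, not_not]
      intro hx
      exact Or.inl hx
    have h3 : m (B ∩ C) = 0 := by
      rw [Set.disjoint_iff_inter_eq_empty.1 hdj]; exact measure_empty
    rw [h1, Set.inter_self, h3, measure_empty, mul_zero, add_zero, zero_add,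
      (hgenfacts B C hB hC hdj hB0 hC0 hcC).1]
  -- half-sum identity
  have hx1 : c / m B₁ ≤ 1 := by
    rw [ENNReal.div_le_iff ha (measure_ne_top m B₁), one_mul]; exact hca
  have hx2 : c / m B₂ ≤ 1 := by
    rw [ENNReal.div_le_iff hb (measure_ne_top m B₂), one_mul]; exact hcb
  have hcoef : ∀ x : ℝ≥0∞, x ≤ 1 → (2⁻¹:ℝ≥0∞) * (1 + x) + 2⁻¹ * (1 - x) = 1 := by
    intro x hx
    rw [mul_add, mul_one, ENNReal.mul_sub (fun _ _ => (by norm_num : (2⁻¹:ℝ≥0∞) ≠ ⊤)), mul_one,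
      add_assoc, add_tsub_cancel_of_le (by calc (2⁻¹:ℝ≥0∞) * x ≤ 2⁻¹ * 1 := mul_le_mul_right hx _
        _ = 2⁻¹ := mul_one _),
      ENNReal.inv_two_add_inv_two]
  have hrec : m.restrict (B₁ ∪ B₂)ᶜ + m.restrict B₁ + m.restrict B₂ = m := by
    rw [add_assoc, ← Measure.restrict_union hd hmes2, add_comm,
      Measure.restrict_add_restrict_compl (hmes1.union hmes2)]
  have habstract : ∀ (r₀ r₁ r₂ : Measure Ω) (p₁ q₁ p₂ q₂ : ℝ≥0∞),
      (2⁻¹:ℝ≥0∞)*p₁ + 2⁻¹*q₁ = 1 → (2⁻¹:ℝ≥0∞)*p₂ + 2⁻¹*q₂ = 1 →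
      (2⁻¹:ℝ≥0∞) • (r₀ + p₁ • r₁ + q₂ • r₂) + (2⁻¹:ℝ≥0∞) • (r₀ + p₂ • r₂ + q₁ • r₁)
        = r₀ + r₁ + r₂ := by
    intro r₀ r₁ r₂ p₁ q₁ p₂ q₂ h1 h2
    refine Measure.ext fun s hs => ?_
    simp only [Measure.add_apply, Measure.smul_apply, smul_eq_mul]
    calc (2⁻¹:ℝ≥0∞) * (r₀ s + p₁ * r₁ s + q₂ * r₂ s)
          + 2⁻¹ * (r₀ s + p₂ * r₂ s + q₁ * r₁ s)
        = ((2⁻¹:ℝ≥0∞) + 2⁻¹) * r₀ s + ((2⁻¹:ℝ≥0∞)*p₁ + 2⁻¹*q₁) * r₁ s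
          + ((2⁻¹:ℝ≥0∞)*p₂ + 2⁻¹*q₂) * r₂ s := by ring
      _ = r₀ s + r₁ s + r₂ s := by
          rw [h1, h2, ENNReal.inv_two_add_inv_two, one_mul, one_mul, one_mul]
  have hsum : (2⁻¹ : ℝ≥0∞) • gen B₁ B₂ + (2⁻¹ : ℝ≥0∞) • gen B₂ B₁ = m := by
    have hgen2 : gen B₂ B₁ = m.restrict (B₁ ∪ B₂)ᶜ + (1 + c / m B₂) • m.restrict B₂
        + (1 - c / m B₁) • m.restrict B₁ := by
      simp only [hgen]
      rw [Set.union_comm B₂ B₁]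
    have hgen1 : gen B₁ B₂ = m.restrict (B₁ ∪ B₂)ᶜ + (1 + c / m B₁) • m.restrict B₁
        + (1 - c / m B₂) • m.restrict B₂ := rfl
    rw [hgen1, hgen2,
      habstract _ _ _ _ _ _ _ (hcoef _ hx1) (hcoef _ hx2), hrec]
  haveI hp1 : IsProbabilityMeasure (gen B₁ B₂) := hprob B₁ B₂ hmes1 hmes2 hd ha hb hcb
  haveI hp2 : IsProbabilityMeasure (gen B₂ B₁) := hprob B₂ B₁ hmes2 hmes1 hd.symm hb ha hca
  set ν₁ : ProbabilityMeasure Ω := ⟨gen B₁ B₂, hp1⟩ with hν₁def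
  set ν₂ : ProbabilityMeasure Ω := ⟨gen B₂ B₁, hp2⟩ with hν₂def
  have hmem1 : ν₁ ∈ {μ' : ProbabilityMeasure Ω |
      prokDist (μ' : Measure Ω) (μn : Measure Ω) ≤ ε} := by
    refine mem_ball_of_forall t hε ?_
    exact hballgen B₁ B₂ hmes1 hmes2 hd ha hb hcb (fun S hS hact => hkey S hS hact)
  have hmem2 : ν₂ ∈ {μ' : ProbabilityMeasure Ω |
      prokDist (μ' : Measure Ω) (μn : Measure Ω) ≤ ε} := by
    refine mem_ball_of_forall t hε ?_
    exact hballgen B₂ B₁ hmes2 hmes1 hd.symm hb ha hca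
      (fun S hS hact => (hkey S hS hact).symm)
  have hθ : (0:ℝ≥0∞) < 2⁻¹ := by simp
  have hθ1 : (2⁻¹:ℝ≥0∞) < 1 := by
    rw [ENNReal.inv_lt_one]
    exact one_lt_two
  have hEq0 : (μ : Measure Ω) = (2⁻¹:ℝ≥0∞) • (ν₁ : Measure Ω)
      + ((1:ℝ≥0∞) - (2⁻¹:ℝ≥0∞)) • (ν₂ : Measure Ω) := by
    rw [show (1:ℝ≥0∞) - 2⁻¹ = 2⁻¹ by simp]
    exact hsum.symm
  obtain ⟨hfix, -⟩ := hext.2 ν₁ hmem1 ν₂ hmem2 (2⁻¹:ℝ≥0∞) hθ hθ1 hEq0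
  have hval : gen B₁ B₂ B₁ = m B₁ := by
    have := congrArg (fun ρ : ProbabilityMeasure Ω => (ρ : Measure Ω) B₁) hfix
    exact this
  have hlt : m B₁ < gen B₁ B₂ B₁ := by
    rw [hgenB B₁ B₂ hmes1 hmes2 hd ha hb hcb]
    exact lt_add_right (measure_ne_top m B₁) hc0
  exact ne_of_gt hlt hval

end Split

section Regions
variable {Ω : Type*} [MetricSpace Ω] [MeasurableSpace Ω] [BorelSpace Ω]

open Classical in
/-- the "type" of a point: which of the atoms are within `ε`. -/
noncomputable def tau (t : Finset Ω) (ε : ℝ) (y : Ω) : Finset Ω :=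
  t.filter (fun x => dist y x ≤ ε)

/-- the region of points of type `T`. -/
def Rset (t : Finset Ω) (ε : ℝ) (T : Finset Ω) : Set Ω := {y | tau t ε y = T}

lemma tau_subset (t : Finset Ω) (ε : ℝ) (y : Ω) : tau t ε y ⊆ t := Finset.filter_subset _ _

lemma mem_tau_iff {t : Finset Ω} {ε : ℝ} {y x : Ω} :
    x ∈ tau t ε y ↔ x ∈ t ∧ dist y x ≤ ε := by
  classical
  simp [tau]

lemma measurableSet_Rset (t : Finset Ω) (ε : ℝ) (T : Finset Ω) :
    MeasurableSet (Rset t ε T) := by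
  classical
  by_cases hT : T ⊆ t
  · have hre : Rset t ε T = ⋂ x ∈ t, {y | dist y x ≤ ε ↔ x ∈ T} := by
      ext y
      simp only [Rset, Set.mem_setOf_eq, Set.mem_iInter]
      constructor
      · intro h x hx
        constructor
        · intro hd; rw [← h]; exact mem_tau_iff.2 ⟨hx, hd⟩
        · intro hm; exact (mem_tau_iff.1 (h ▸ hm)).2
      · intro h
        ext x
        rw [mem_tau_iff]
        constructor
        · rintro ⟨hx, hd⟩; exact (h x hx).1 hd
        · intro hm; exact ⟨hT hm, (h x (hT hm)).2 hm⟩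
    rw [hre]
    refine MeasurableSet.biInter t.countable_toSet fun x _ => ?_
    by_cases hxT : x ∈ T
    · have he : {y : Ω | dist y x ≤ ε ↔ x ∈ T} = {y | dist y x ≤ ε} := by
        ext y; simp [hxT]
      rw [he]
      exact (isClosed_le (continuous_id.dist continuous_const) continuous_const).measurableSet
    · have he : {y : Ω | dist y x ≤ ε ↔ x ∈ T} = {y | dist y x ≤ ε}ᶜ := by
        ext y; simp [hxT]
      rw [he]
      exact ((isClosed_le (continuous_id.dist continuous_const)
        continuous_const).measurableSet).compl
  · have hre : Rset t ε T = ∅ := by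
      ext y
      simp only [Rset, Set.mem_setOf_eq, Set.mem_empty_iff_false, iff_false]
      intro h; exact hT (h ▸ tau_subset t ε y)
    rw [hre]; exact MeasurableSet.empty

lemma mem_Gset_iff_of_mem_Rset {t S T : Finset Ω} {ε : ℝ} {y : Ω} (hy : y ∈ Rset t ε T) :
    y ∈ Gset t S ε ↔ T ⊆ S := by
  have hτ : tau t ε y = T := hy
  constructor
  · intro hG x hxT
    rcases mem_tau_iff.1 (hτ ▸ hxT) with ⟨hxt, hd⟩
    by_contra hxS
    exact absurd hd (not_le.2 (hG x hxt hxS))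
  · intro hTS x hxt hxS
    by_contra hc
    push_neg at hc
    exact hxS (hTS (hτ ▸ mem_tau_iff.2 ⟨hxt, hc⟩))

/-- a finite measure that cannot be split is concentrated at a point. -/
lemma exists_dirac_point [SecondCountableTopology Ω] (m : Measure Ω) [IsFiniteMeasure m]
    (R : Set Ω) (hR0 : m R ≠ 0)
    (H : ∀ B : Set Ω, MeasurableSet B → m (R ∩ B) = 0 ∨ m (R \ B) = 0) :
    ∃ y, y ∈ R ∧ m (R \ {y}) = 0 := by
  classical
  obtain ⟨b, hbc, hbne, hbasis⟩ := TopologicalSpace.exists_countable_basis Ω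
  set N := ⋃₀ {U ∈ b | m (R ∩ U) = 0} with hN
  have hNnull : m (R ∩ N) = 0 := by
    have hsub : R ∩ N = ⋃ U ∈ {U ∈ b | m (R ∩ U) = 0}, R ∩ U := by
      rw [hN, Set.sUnion_eq_biUnion, Set.inter_iUnion₂]
    rw [hsub, measure_biUnion_null_iff (hbc.mono (Set.sep_subset _ _))]
    intro U hU
    exact hU.2
  have hmesN : MeasurableSet N :=
    (isOpen_sUnion (fun U hU => hbasis.isOpen hU.1)).measurableSet
  have hpos : m (R \ N) ≠ 0 := by
    intro h0
    apply hR0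
    have h1 : m (R ∩ N) + m (R \ N) = m R := measure_inter_add_diff R hmesN
    rw [hNnull, h0, add_zero] at h1
    exact h1.symm
  obtain ⟨y, hyR, hyN⟩ := nonempty_of_measure_ne_zero hpos
  refine ⟨y, hyR, ?_⟩
  have hnull : ∀ k : ℕ, m (R ∩ {z | ((k:ℝ)+1)⁻¹ ≤ dist z y}) = 0 := by
    intro k
    have hrpos : (0:ℝ) < ((k:ℝ)+1)⁻¹ := by positivity
    obtain ⟨U, hUb, hyU, hUball⟩ :=
      hbasis.mem_nhds_iff.1 (Metric.ball_mem_nhds y hrpos)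
    have hU0 : m (R ∩ U) ≠ 0 := by
      intro h0
      exact hyN (Set.mem_sUnion.2 ⟨U, ⟨hUb, h0⟩, hyU⟩)
    rcases H U (hbasis.isOpen hUb).measurableSet with h | h
    · exact absurd h hU0
    · refine measure_mono_null ?_ h
      rintro z ⟨hzR, hzd⟩
      refine ⟨hzR, fun hzU => ?_⟩
      have hball := hUball hzU
      rw [Metric.mem_ball] at hball
      have hzd' : ((k:ℝ)+1)⁻¹ ≤ dist z y := hzd
      exact absurd hball (not_lt.2 hzd')
  have hcup : R \ {y} = ⋃ k : ℕ, R ∩ {z | ((k:ℝ)+1)⁻¹ ≤ dist z y} := by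
    ext z
    simp only [Set.mem_diff, Set.mem_singleton_iff, Set.mem_iUnion, Set.mem_inter_iff,
      Set.mem_setOf_eq]
    constructor
    · rintro ⟨hzR, hzy⟩
      have hd : 0 < dist z y := dist_pos.2 hzy
      obtain ⟨k, hk⟩ := exists_nat_gt (dist z y)⁻¹
      refine ⟨k, hzR, ?_⟩
      rw [inv_le_comm₀ (by positivity) hd]
      linarith
    · rintro ⟨k, hzR, hk⟩
      have hpos' : (0:ℝ) < ((k:ℝ)+1)⁻¹ := by positivity
      exact ⟨hzR, fun h => by rw [h, dist_self] at hk; linarith⟩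
  rw [hcup]
  exact measure_iUnion_null fun k => hnull k

end Regions

section Main
variable {Ω : Type*} [MetricSpace Ω] [MeasurableSpace Ω] [BorelSpace Ω]


theorem main_general [SecondCountableTopology Ω] (n : ℕ) (μn : ProbabilityMeasure Ω)
    (hμn : FinitelySupported n (μn : Measure Ω)) (ε : ℝ) (hε : 0 < ε)
    (μ : ProbabilityMeasure Ω)
    (hμ : IsExtremePt
      {μ' : ProbabilityMeasure Ω | prokDist (μ' : Measure Ω) (μn : Measure Ω) ≤ ε} μ) :
    FinitelySupported (n + 2) (μ : Measure Ω) := by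
  classical
  obtain ⟨t, htn, ht0⟩ := hμn
  set m : Measure Ω := (μ : Measure Ω) with hm
  -- Step A : on each region of positive measure, μ is concentrated at one point
  have stepA : ∀ T ∈ t.powerset, m (Rset t ε T) ≠ 0 →
      ∃ y, y ∈ Rset t ε T ∧ m (Rset t ε T \ {y}) = 0 := by
    intro T hTp hT0
    by_cases H : ∀ B : Set Ω, MeasurableSet B →
      m (Rset t ε T ∩ B) = 0 ∨ m (Rset t ε T \ B) = 0
    · exact exists_dirac_point m (Rset t ε T) hT0 H
    · push_neg at H
      obtain ⟨B, hBmes, hB1, hB2⟩ := H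
      exfalso
      refine split_lemma μn μ t ht0 hε hμ (Rset t ε T ∩ B) (Rset t ε T \ B)
        ((measurableSet_Rset t ε T).inter hBmes)
        ((measurableSet_Rset t ε T).diff hBmes)
        (Set.disjoint_left.2 fun z hz1 hz2 => hz2.2 hz1.2)
        hB1 hB2 ?_
      intro S hSp hact
      by_cases hTS : T ⊆ S
      · have e1 : Gset t S ε ∩ (Rset t ε T ∩ B) = Rset t ε T ∩ B :=
          Set.inter_eq_self_of_subset_right
            (fun z hz => (mem_Gset_iff_of_mem_Rset hz.1).2 hTS)
        have e2 : Gset t S ε ∩ (Rset t ε T \ B) = Rset t ε T \ B :=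
          Set.inter_eq_self_of_subset_right
            (fun z hz => (mem_Gset_iff_of_mem_Rset hz.1).2 hTS)
        rw [e1, e2, mul_comm]
      · have e1 : Gset t S ε ∩ (Rset t ε T ∩ B) = ∅ := by
          ext z
          simp only [Set.mem_inter_iff, Set.mem_empty_iff_false, iff_false, not_and]
          intro hzG hzR
          exact absurd ((mem_Gset_iff_of_mem_Rset hzR).1 hzG) hTS
        have e2 : Gset t S ε ∩ (Rset t ε T \ B) = ∅ := by
          ext z
          constructor
          · rintro ⟨hzG, hzR, -⟩
            exact absurd ((mem_Gset_iff_of_mem_Rset hzR).1 hzG) hTS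
          · exact fun h => absurd h (Set.notMem_empty z)
        rw [e1, e2, measure_empty, mul_zero, mul_zero]
  -- choose support points
  have hchoice : ∀ T : Finset Ω, ∃ y, (T ∈ t.powerset → m (Rset t ε T) ≠ 0 →
      (y ∈ Rset t ε T ∧ m (Rset t ε T \ {y}) = 0)) := by
    intro T
    by_cases hc : T ∈ t.powerset ∧ m (Rset t ε T) ≠ 0
    · obtain ⟨y, hy⟩ := stepA T hc.1 hc.2
      exact ⟨y, fun _ _ => hy⟩
    · have hne : Nonempty Ω := by
        obtain ⟨z, -⟩ := nonempty_of_measure_ne_zero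
          (show m Set.univ ≠ 0 by rw [measure_univ]; exact one_ne_zero)
        exact ⟨z⟩
      exact ⟨hne.some, fun h1 h2 => absurd ⟨h1, h2⟩ hc⟩
  choose yT hyT using hchoice
  set types := t.powerset.filter (fun T => m (Rset t ε T) ≠ 0) with htypes_def
  set F := types.image yT with hFdef
  have hsupp : m ((↑F : Set Ω)ᶜ) = 0 := by
    have hsub : (↑F : Set Ω)ᶜ ⊆
        ⋃ T ∈ (↑(t.powerset) : Set (Finset Ω)), (Rset t ε T ∩ (↑F : Set Ω)ᶜ) := by
      intro y hy
      refine Set.mem_biUnion ?_ ⟨rfl, hy⟩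
      simp only [Finset.coe_powerset, Set.mem_preimage, Set.mem_powerset_iff,
        Finset.coe_subset]
      exact tau_subset t ε y
    refine measure_mono_null hsub ?_
    rw [measure_biUnion_null_iff ((t.powerset).finite_toSet.countable)]
    intro T hTp
    by_cases hT0 : m (Rset t ε T) = 0
    · exact measure_mono_null Set.inter_subset_left hT0
    · have hTp' : T ∈ t.powerset := hTp
      have hy := hyT T hTp' hT0
      refine measure_mono_null ?_ hy.2
      rintro z ⟨hzR, hzF⟩
      refine ⟨hzR, fun hzy => ?_⟩
      apply hzF
      have : z = yT T := hzy
      rw [this]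
      exact Finset.mem_coe.2 (Finset.mem_image_of_mem yT
        (Finset.mem_filter.2 ⟨hTp', hT0⟩))
  by_cases hFcard : F.card ≤ n + 2
  · exact ⟨F, hFcard, hsupp⟩
  -- Step B
  exfalso
  have htypes_card : n + 3 ≤ types.card := by
    have h1 : F.card ≤ types.card := Finset.card_image_le
    omega
  have hL1 : ∀ S ⊆ t, m (Gset t S ε) ≤ (μn : Measure Ω) ↑S + ENNReal.ofReal ε :=
    constraint_of_mem_ball t hε ht0
      (hμ.1 : prokDist (μ : Measure Ω) (μn : Measure Ω) ≤ ε)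
  set Act := t.powerset.filter
    (fun S => m (Gset t S ε) = (μn : Measure Ω) ↑S + ENNReal.ofReal ε) with hActdef
  have pinch : ∀ x y X Y : ℝ≥0∞, y ≠ ⊤ → x ≤ X → y ≤ Y → x + y = X + Y → x = X := by
    intro x y X Y hY hx hy hxy
    by_contra h
    have hlt : x < X := lt_of_le_of_ne hx h
    exact absurd hxy (ne_of_lt (ENNReal.add_lt_add_of_lt_of_le hY hlt hy))
  have hActInter : ∀ S₁ ∈ Act, ∀ S₂ ∈ Act, (S₁ ∩ S₂) ∈ Act ∧ (S₁ ∪ S₂) ∈ Act ∧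
      m (Gset t (S₁ ∪ S₂) ε \ (Gset t S₁ ε ∪ Gset t S₂ ε)) = 0 := by
    intro S₁ h₁ S₂ h₂
    obtain ⟨hp₁, he₁⟩ := Finset.mem_filter.1 h₁
    obtain ⟨hp₂, he₂⟩ := Finset.mem_filter.1 h₂
    have hp₁' : S₁ ⊆ t := Finset.mem_powerset.1 hp₁
    have hp₂' : S₂ ⊆ t := Finset.mem_powerset.1 hp₂
    have hGG : Gset t S₁ ε ∩ Gset t S₂ ε = Gset t (S₁ ∩ S₂) ε := by
      ext y
      simp only [Set.mem_inter_iff, Gset, Set.mem_setOf_eq, Finset.mem_inter]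
      constructor
      · rintro ⟨hg₁, hg₂⟩ x hxt hxS
        by_cases hx1 : x ∈ S₁
        · exact hg₂ x hxt (fun hx2 => hxS ⟨hx1, hx2⟩)
        · exact hg₁ x hxt hx1
      · intro hg
        constructor
        · intro x hxt hx1
          exact hg x hxt (fun hx => hx1 hx.1)
        · intro x hxt hx2
          exact hg x hxt (fun hx => hx2 hx.2)
    have hGsub : Gset t S₁ ε ∪ Gset t S₂ ε ⊆ Gset t (S₁ ∪ S₂) ε := by
      rintro y (hy | hy) x hxt hxS
      · exact hy x hxt (fun h => hxS (Finset.mem_union_left _ h))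
      · exact hy x hxt (fun h => hxS (Finset.mem_union_right _ h))
    have hmes₂ := measurableSet_Gset t S₂ ε
    have key1 : m (Gset t S₁ ε ∪ Gset t S₂ ε) + m (Gset t S₁ ε ∩ Gset t S₂ ε)
        = ((μn : Measure Ω) ↑S₁ + ENNReal.ofReal ε)
          + ((μn : Measure Ω) ↑S₂ + ENNReal.ofReal ε) := by
      rw [measure_union_add_inter _ hmes₂, he₁, he₂]
    have hpadd : (μn : Measure Ω) ↑S₁ + (μn : Measure Ω) ↑S₂
        = (μn : Measure Ω) ↑(S₁ ∪ S₂) + (μn : Measure Ω) ↑(S₁ ∩ S₂) := by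
      have hmS₂ : MeasurableSet (↑S₂ : Set Ω) := S₂.measurableSet
      have h := measure_union_add_inter (μ := (μn : Measure Ω)) (↑S₁ : Set Ω) hmS₂
      rw [← Finset.coe_union, ← Finset.coe_inter] at h
      exact h.symm
    have hsum2 : m (Gset t S₁ ε ∪ Gset t S₂ ε) + m (Gset t S₁ ε ∩ Gset t S₂ ε)
        = ((μn : Measure Ω) ↑(S₁ ∪ S₂) + ENNReal.ofReal ε)
          + ((μn : Measure Ω) ↑(S₁ ∩ S₂) + ENNReal.ofReal ε) := by
      rw [key1]
      calc ((μn : Measure Ω) ↑S₁ + ENNReal.ofReal ε)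
            + ((μn : Measure Ω) ↑S₂ + ENNReal.ofReal ε)
          = ((μn : Measure Ω) ↑S₁ + (μn : Measure Ω) ↑S₂)
            + (ENNReal.ofReal ε + ENNReal.ofReal ε) := by ring
        _ = ((μn : Measure Ω) ↑(S₁ ∪ S₂) + (μn : Measure Ω) ↑(S₁ ∩ S₂))
            + (ENNReal.ofReal ε + ENNReal.ofReal ε) := by rw [hpadd]
        _ = ((μn : Measure Ω) ↑(S₁ ∪ S₂) + ENNReal.ofReal ε)
            + ((μn : Measure Ω) ↑(S₁ ∩ S₂) + ENNReal.ofReal ε) := by ring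
    have hUle : m (Gset t (S₁ ∪ S₂) ε) ≤ (μn : Measure Ω) ↑(S₁ ∪ S₂) + ENNReal.ofReal ε :=
      hL1 _ (Finset.union_subset hp₁' hp₂')
    have hIle : m (Gset t S₁ ε ∩ Gset t S₂ ε)
        ≤ (μn : Measure Ω) ↑(S₁ ∩ S₂) + ENNReal.ofReal ε := by
      rw [hGG]
      exact hL1 _ (subset_trans Finset.inter_subset_left hp₁')
    have hALe : m (Gset t S₁ ε ∪ Gset t S₂ ε) ≤ m (Gset t (S₁ ∪ S₂) ε) := measure_mono hGsub
    have hU : m (Gset t S₁ ε ∪ Gset t S₂ ε)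
        = (μn : Measure Ω) ↑(S₁ ∪ S₂) + ENNReal.ofReal ε :=
      pinch _ _ _ _ (measure_ne_top m _) (le_trans hALe hUle) hIle hsum2
    have hIeq : m (Gset t S₁ ε ∩ Gset t S₂ ε)
        = (μn : Measure Ω) ↑(S₁ ∩ S₂) + ENNReal.ofReal ε :=
      pinch _ _ _ _ (measure_ne_top m _) hIle (le_trans hALe hUle)
        (by rw [add_comm, hsum2]; exact add_comm _ _)
    have hGUeq : m (Gset t (S₁ ∪ S₂) ε) = (μn : Measure Ω) ↑(S₁ ∪ S₂) + ENNReal.ofReal ε :=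
      le_antisymm hUle (hU ▸ hALe)
    refine ⟨?_, ?_, ?_⟩
    · refine Finset.mem_filter.2 ⟨Finset.mem_powerset.2
        (subset_trans Finset.inter_subset_left hp₁'), ?_⟩
      rw [← hGG]
      exact hIeq
    · exact Finset.mem_filter.2
        ⟨Finset.mem_powerset.2 (Finset.union_subset hp₁' hp₂'), hGUeq⟩
    · rw [measure_diff hGsub (((measurableSet_Gset t S₁ ε).union hmes₂).nullMeasurableSet)
        (measure_ne_top m _), hGUeq, hU, tsub_self]
  have hprime : ∀ T ∈ types, ∀ S₁ ∈ Act, ∀ S₂ ∈ Act, T ⊆ S₁ ∪ S₂ → T ⊆ S₁ ∨ T ⊆ S₂ := by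
    intro T hT S₁ h₁ S₂ h₂ hTsub
    by_contra hc
    push_neg at hc
    obtain ⟨hTp, hT0⟩ := Finset.mem_filter.1 hT
    apply hT0
    refine measure_mono_null ?_ (hActInter S₁ h₁ S₂ h₂).2.2
    intro z hz
    refine ⟨(mem_Gset_iff_of_mem_Rset hz).2 hTsub, ?_⟩
    rintro (hzG | hzG)
    · exact hc.1 ((mem_Gset_iff_of_mem_Rset hz).1 hzG)
    · exact hc.2 ((mem_Gset_iff_of_mem_Rset hz).1 hzG)
  have hActInf : ∀ (Fs : Finset (Finset Ω)) (hne : Fs.Nonempty),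
      (∀ A ∈ Fs, A ∈ Act) → Fs.inf' hne id ∈ Act := by
    intro Fs hne
    refine Finset.Nonempty.cons_induction
      (motive := fun Fs hne => (∀ A ∈ Fs, A ∈ Act) → Fs.inf' hne id ∈ Act) ?_ ?_ hne
    · intro A hmem
      simpa using hmem A (Finset.mem_singleton_self A)
    · intro A Fs' hA hFs IH hmem
      rw [Finset.inf'_cons]
      have h1 := hmem A (Finset.mem_cons_self A Fs')
      have h2 := IH (fun B hB => hmem B (Finset.mem_cons_of_mem hB))
      have h3 := (hActInter A h1 _ h2).1
      exact h3
  have hActSup : ∀ (Fs : Finset (Finset Ω)) (hne : Fs.Nonempty),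
      (∀ A ∈ Fs, A ∈ Act) → Fs.sup' hne id ∈ Act := by
    intro Fs hne
    refine Finset.Nonempty.cons_induction
      (motive := fun Fs hne => (∀ A ∈ Fs, A ∈ Act) → Fs.sup' hne id ∈ Act) ?_ ?_ hne
    · intro A hmem
      simpa using hmem A (Finset.mem_singleton_self A)
    · intro A Fs' hA hFs IH hmem
      rw [Finset.sup'_cons]
      have h1 := hmem A (Finset.mem_cons_self A Fs')
      have h2 := IH (fun B hB => hmem B (Finset.mem_cons_of_mem hB))
      have h3 := (hActInter A h1 _ h2).2.1
      exact h3
  set Afilt : Finset Ω → Finset (Finset Ω) := fun T => Act.filter (fun S => T ⊆ S) with hAfilt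
  set ψ : Finset Ω → Option (Finset Ω) :=
    fun T => if h : (Afilt T).Nonempty then some ((Afilt T).inf' h id) else none with hψ
  have hmin : ∀ T, ∀ h : (Afilt T).Nonempty,
      ((Afilt T).inf' h id ∈ Act) ∧ T ⊆ (Afilt T).inf' h id ∧
        ∀ S ∈ Act, T ⊆ S → (Afilt T).inf' h id ⊆ S := by
    intro T h
    refine ⟨hActInf _ h (fun A hA => (Finset.mem_filter.1 hA).1), ?_, ?_⟩
    · exact Finset.le_inf' h id (fun b hb => (Finset.mem_filter.1 hb).2)
    · intro S hS hTS
      exact Finset.inf'_le id (Finset.mem_filter.2 ⟨hS, hTS⟩)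
  set Ax : Ω → Finset Ω := fun x =>
    if h : (Act.filter (fun S => x ∈ S)).Nonempty
    then (Act.filter (fun S => x ∈ S)).inf' h id else ∅ with hAx
  have hsupPrime : ∀ T ∈ types, ∀ (Fs : Finset (Finset Ω)) (hne : Fs.Nonempty),
      (∀ A ∈ Fs, A ∈ Act) → T ⊆ Fs.sup id → ∃ A ∈ Fs, T ⊆ A := by
    intro T hT Fs hne
    refine Finset.Nonempty.cons_induction
      (motive := fun Fs _ => (∀ A ∈ Fs, A ∈ Act) → T ⊆ Fs.sup id → ∃ A ∈ Fs, T ⊆ A) ?_ ?_ hne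
    · intro A hmem hsub
      exact ⟨A, Finset.mem_singleton_self A, by simpa using hsub⟩
    · intro A Fs' hA hFs IH hmem hsub
      rw [Finset.sup_cons] at hsub
      have hFact : Fs'.sup id ∈ Act := by
        rw [← Finset.sup'_eq_sup hFs id]
        exact hActSup Fs' hFs (fun B hB => hmem B (Finset.mem_cons_of_mem hB))
      have hsub' : T ⊆ A ∪ Fs'.sup id := by
        simpa [Finset.sup_eq_union] using hsub
      rcases hprime T hT A (hmem A (Finset.mem_cons_self A Fs')) (Fs'.sup id) hFact hsub'
        with h | h
      · exact ⟨A, Finset.mem_cons_self A Fs', h⟩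
      · obtain ⟨B, hBF, hTB⟩ := IH (fun B hB => hmem B (Finset.mem_cons_of_mem hB)) h
        exact ⟨B, Finset.mem_cons_of_mem hBF, hTB⟩
  have hform : ∀ T ∈ types, ∀ h : (Afilt T).Nonempty,
      (Afilt T).inf' h id = ∅ ∨ ∃ x ∈ t, (Afilt T).inf' h id = Ax x := by
    intro T hT h
    by_cases hAe : (Afilt T).inf' h id = ∅
    · exact Or.inl hAe
    refine Or.inr ?_
    obtain ⟨hAAct, hTA, hAmin⟩ := hmin T h
    set A := (Afilt T).inf' h id with hA
    have hAt : A ⊆ t := Finset.mem_powerset.1 (Finset.mem_filter.1 hAAct).1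
    have hAxfacts : ∀ x ∈ A, Ax x ∈ Act ∧ x ∈ Ax x ∧ Ax x ⊆ A := by
      intro x hxA
      have hne : (Act.filter (fun S => x ∈ S)).Nonempty :=
        ⟨A, Finset.mem_filter.2 ⟨hAAct, hxA⟩⟩
      have hAxdef : Ax x = (Act.filter (fun S => x ∈ S)).inf' hne id := by
        rw [hAx]
        exact dif_pos hne
      refine ⟨?_, ?_, ?_⟩
      · rw [hAxdef]
        exact hActInf _ hne (fun B hB => (Finset.mem_filter.1 hB).1)
      · rw [hAxdef]
        have h5 := Finset.le_inf' hne id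
          (fun b hb => Finset.singleton_subset_iff.2 (Finset.mem_filter.1 hb).2)
        exact Finset.singleton_subset_iff.1 h5
      · rw [hAxdef]
        exact Finset.inf'_le id (Finset.mem_filter.2 ⟨hAAct, hxA⟩)
    have hAne : A.Nonempty := Finset.nonempty_iff_ne_empty.2 hAe
    set Fs : Finset (Finset Ω) := A.image Ax with hFs
    have hFne : Fs.Nonempty := hAne.image _
    have hsupA : Fs.sup id = A := by
      apply Finset.Subset.antisymm
      · show Fs.sup id ≤ A
        refine Finset.sup_le ?_
        intro B hB
        obtain ⟨x, hxA, rfl⟩ := Finset.mem_image.1 hB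
        exact (hAxfacts x hxA).2.2
      · intro x hxA
        have h1 : Ax x ⊆ Fs.sup id := Finset.le_sup (f := id) (Finset.mem_image_of_mem Ax hxA)
        exact h1 ((hAxfacts x hxA).2.1)
    obtain ⟨B, hBF, hTB⟩ := hsupPrime T hT Fs hFne
      (fun B hB => by obtain ⟨x, hxA, rfl⟩ := Finset.mem_image.1 hB; exact (hAxfacts x hxA).1)
      (by rw [hsupA]; exact hTA)
    obtain ⟨x, hxA, rfl⟩ := Finset.mem_image.1 hBF
    have hsub2 : A ⊆ Ax x := hAmin (Ax x) (hAxfacts x hxA).1 hTB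
    exact ⟨x, hAt hxA, Finset.Subset.antisymm hsub2 (hAxfacts x hxA).2.2⟩
  set K : Finset (Option (Finset Ω)) := insert none ((insert ∅ (t.image Ax)).image some)
    with hK
  have hKcard : K.card ≤ n + 2 := by
    have h1 : K.card ≤ ((insert ∅ (t.image Ax)).image some).card + 1 :=
      Finset.card_insert_le _ _
    have h2 : ((insert ∅ (t.image Ax)).image some).card ≤ (insert ∅ (t.image Ax)).card :=
      Finset.card_image_le
    have h3 : (insert ∅ (t.image Ax)).card ≤ (t.image Ax).card + 1 := Finset.card_insert_le _ _
    have h4 : (t.image Ax).card ≤ t.card := Finset.card_image_le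
    omega
  have hmaps : ∀ T ∈ types, ψ T ∈ K := by
    intro T hT
    by_cases h : (Afilt T).Nonempty
    · have hψT : ψ T = some ((Afilt T).inf' h id) := by
        rw [hψ]
        exact dif_pos h
      rcases hform T hT h with hA | ⟨x, hxt, hA⟩
      · rw [hψT, hA]
        exact Finset.mem_insert_of_mem
          (Finset.mem_image_of_mem some (Finset.mem_insert_self _ _))
      · rw [hψT, hA]
        exact Finset.mem_insert_of_mem (Finset.mem_image_of_mem some
          (Finset.mem_insert_of_mem (Finset.mem_image_of_mem Ax hxt)))
    · have hψT : ψ T = none := by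
        rw [hψ]
        exact dif_neg h
      rw [hψT]
      exact Finset.mem_insert_self _ _
  have hlt : K.card < types.card := by omega
  obtain ⟨T₁, hT₁, T₂, hT₂, hne12, hψeq⟩ :=
    Finset.exists_ne_map_eq_of_card_lt_of_maps_to hlt hmaps
  have hiff : ∀ S ∈ Act, (T₁ ⊆ S ↔ T₂ ⊆ S) := by
    intro S hS
    by_cases h1 : (Afilt T₁).Nonempty
    · have h2 : (Afilt T₂).Nonempty := by
        by_contra h2
        rw [hψ] at hψeq
        simp only [dif_pos h1, dif_neg h2] at hψeq
        exact Option.some_ne_none _ hψeq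
      have he : (Afilt T₁).inf' h1 id = (Afilt T₂).inf' h2 id := by
        rw [hψ] at hψeq
        simp only [dif_pos h1, dif_pos h2, Option.some_inj] at hψeq
        exact hψeq
      obtain ⟨hAct1, hTA1, hmin1⟩ := hmin T₁ h1
      obtain ⟨hAct2, hTA2, hmin2⟩ := hmin T₂ h2
      constructor
      · intro h
        exact subset_trans hTA2 (he ▸ hmin1 S hS h)
      · intro h
        refine subset_trans hTA1 ?_
        have h6 := hmin2 S hS h
        rw [← he] at h6
        exact h6
    · have h2 : ¬ (Afilt T₂).Nonempty := by
        by_contra h2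
        rw [hψ] at hψeq
        simp only [dif_neg h1, dif_pos h2] at hψeq
        exact Option.some_ne_none _ hψeq.symm
      constructor
      · intro h
        exact absurd ⟨S, Finset.mem_filter.2 ⟨hS, h⟩⟩ h1
      · intro h
        exact absurd ⟨S, Finset.mem_filter.2 ⟨hS, h⟩⟩ h2
  obtain ⟨hT₁p, hT₁0⟩ := Finset.mem_filter.1 hT₁
  obtain ⟨hT₂p, hT₂0⟩ := Finset.mem_filter.1 hT₂
  refine split_lemma μn μ t ht0 hε hμ (Rset t ε T₁) (Rset t ε T₂)
    (measurableSet_Rset t ε T₁) (measurableSet_Rset t ε T₂)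
    (Set.disjoint_left.2 fun z hz1 hz2 => hne12 ((hz1 : tau t ε z = T₁).symm.trans hz2))
    hT₁0 hT₂0 ?_
  intro S hSp hact
  have hSAct : S ∈ Act := Finset.mem_filter.2 ⟨hSp, hact⟩
  by_cases h1 : T₁ ⊆ S
  · have h2 : T₂ ⊆ S := (hiff S hSAct).1 h1
    have e1 : Gset t S ε ∩ Rset t ε T₁ = Rset t ε T₁ :=
      Set.inter_eq_self_of_subset_right (fun z hz => (mem_Gset_iff_of_mem_Rset hz).2 h1)
    have e2 : Gset t S ε ∩ Rset t ε T₂ = Rset t ε T₂ :=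
      Set.inter_eq_self_of_subset_right (fun z hz => (mem_Gset_iff_of_mem_Rset hz).2 h2)
    rw [e1, e2, mul_comm]
  · have h2 : ¬ T₂ ⊆ S := fun h => h1 ((hiff S hSAct).2 h)
    have e1 : Gset t S ε ∩ Rset t ε T₁ = ∅ := by
      ext z
      constructor
      · rintro ⟨hzG, hzR⟩
        exact absurd ((mem_Gset_iff_of_mem_Rset hzR).1 hzG) h1
      · exact fun h => absurd h (Set.notMem_empty z)
    have e2 : Gset t S ε ∩ Rset t ε T₂ = ∅ := by
      ext z
      constructor
      · rintro ⟨hzG, hzR⟩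
        exact absurd ((mem_Gset_iff_of_mem_Rset hzR).1 hzG) h2
      · exact fun h => absurd h (Set.notMem_empty z)
    rw [e1, e2, measure_empty, mul_zero, mul_zero]

end Main


/-- every extreme point of the closed Prokhorov ball of radius `ε` about
a measure supported on at most `n` points is supported on at most `n+2` points. -/
theorem extremePt_prokhorov_ball_finitelySupported
    {Y : Type*} [MetricSpace Y] [PolishSpace Y] [MeasurableSpace Y] [BorelSpace Y]
    (s : Set Y) (hs : MeasurableSet s) (n : ℕ)
    (μn : ProbabilityMeasure s) (hμn : FinitelySupported n (μn : Measure s))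
    (ε : ℝ) (hε : 0 < ε) (μ : ProbabilityMeasure s)
    (hμ : IsExtremePt
      {μ' : ProbabilityMeasure s | prokDist (μ' : Measure s) (μn : Measure s) ≤ ε} μ) :
    FinitelySupported (n + 2) (μ : Measure s) :=
  main_general n μn hμn ε hε μ hμ
end

section
/- Let X be a Borel subset of a Polish metric space and let 𝓜(X) carry the Kantorovich extended metric d_K(μ₁, μ₂) = sup{∫ f d(μ₁−μ₂) : ‖f‖_L ≤ 1}. For μₙ supported on at most n points and ε > 0, every extreme point of the ball B_ε(μₙ) = {μ : d_K(μ, μₙ) ≤ ε} is supported on at most n+2 points. -/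
open MeasureTheory Set

/-- The Kantorovich extended metric
`d_K(μ₁,μ₂) = sup {∫ f dμ₁ − ∫ f dμ₂ : ‖f‖_L ≤ 1}`. -/
noncomputable def kantDist {X : Type*} [MetricSpace X] [MeasurableSpace X]
    (μ₁ μ₂ : Measure X) : ENNReal :=
  ⨆ f : {f : X → ℝ // LipschitzWith 1 f},
    ENNReal.ofReal ((∫ x, f.1 x ∂μ₁) - ∫ x, f.1 x ∂μ₂)

set_option linter.unusedSectionVars false

namespace KantProof

variable {X : Type*} [MetricSpace X] [MeasurableSpace X] [BorelSpace X]

lemma nonempty_of_prob (μ : Measure X) [IsProbabilityMeasure μ] : Nonempty X := by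
  by_contra h
  have h1 : μ Set.univ = 1 := measure_univ
  rw [Set.univ_eq_empty_iff.mpr (not_nonempty_iff.mp h), measure_empty] at h1
  exact zero_ne_one h1

lemma ae_mem_of_null_compl {ν : Measure X} {t : Finset X} (h0 : ν ((↑t : Set X)ᶜ) = 0) :
    ∀ᵐ x ∂ν, x ∈ (↑t : Set X) :=
  mem_ae_iff.mpr h0

lemma integrable_of_null_compl {ν : Measure X} [IsFiniteMeasure ν] {t : Finset X}
    (h0 : ν ((↑t : Set X)ᶜ) = 0) (f : X → ℝ) (hf : Continuous f) : Integrable f ν := by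
  rcases t.eq_empty_or_nonempty with rfl | hne
  · have : ν Set.univ = 0 := by simpa using h0
    rw [Measure.measure_univ_eq_zero.mp this]
    exact integrable_zero_measure
  · refine Integrable.mono' (integrable_const (t.sup' hne fun z => |f z|))
      hf.aestronglyMeasurable ?_
    filter_upwards [ae_mem_of_null_compl h0] with x hx
    rw [Real.norm_eq_abs]
    exact Finset.le_sup' (fun z => |f z|) hx

lemma integral_eq_sum {ν : Measure X} [IsFiniteMeasure ν] {t : Finset X}
    (h0 : ν ((↑t : Set X)ᶜ) = 0) (f : X → ℝ) (hf : Continuous f) :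
    ∫ x, f x ∂ν = ∑ z ∈ t, (ν {z}).toReal * f z := by
  have hr : ν.restrict ↑t = ν :=
    Measure.restrict_eq_self_of_ae_mem (ae_mem_of_null_compl h0)
  have h1 : ∫ x, f x ∂ν = ∫ x in (↑t : Set X), f x ∂ν := by rw [hr]
  rw [h1, integral_finset t ((integrable_of_null_compl h0 f hf).integrableOn)]
  simp [smul_eq_mul, measureReal_def]

/-- Sum of restrictions to disjoint sets plus restriction to complement of union. -/
lemma sum_restrict_add_compl {k : ℕ} {μ : Measure X} (B : Fin k → Set X)
    (hm : ∀ j, MeasurableSet (B j)) (hd : Pairwise (Function.onFun Disjoint B)) :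
    (∑ j, μ.restrict (B j)) + μ.restrict ((⋃ j, B j)ᶜ) = μ := by
  ext s hs
  have hU : MeasurableSet (⋃ j, B j) := MeasurableSet.iUnion hm
  rw [Measure.add_apply, Measure.finset_sum_apply]
  have h1 : μ s = μ (s ∩ ⋃ j, B j) + μ (s \ ⋃ j, B j) :=
    (measure_inter_add_diff s hU).symm
  have h2 : μ (s ∩ ⋃ j, B j) = ∑ j, μ (s ∩ B j) := by
    rw [Set.inter_iUnion, measure_iUnion ?_ fun j => hs.inter (hm j)]
    · exact tsum_fintype _
    · intro i j hij
      exact Disjoint.mono Set.inter_subset_right Set.inter_subset_right (hd hij)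
  have h3 : ∀ j, μ.restrict (B j) s = μ (s ∩ B j) := fun j => Measure.restrict_apply hs
  have h4 : μ.restrict ((⋃ j, B j)ᶜ) s = μ (s \ ⋃ j, B j) := by
    rw [Measure.restrict_apply hs, Set.diff_eq]
  rw [h4, Finset.sum_congr rfl fun j _ => h3 j, ← h2]
  exact h1.symm

lemma sum_setIntegral_eq {k : ℕ} {μ : Measure X} (B : Fin k → Set X)
    (hm : ∀ j, MeasurableSet (B j)) (hd : Pairwise (Function.onFun Disjoint B))
    {g : X → ℝ} (hg : Integrable g μ) :
    (∑ j, ∫ x in B j, g x ∂μ) + ∫ x in (⋃ j, B j)ᶜ, g x ∂μ = ∫ x, g x ∂μ := by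
  have h := sum_restrict_add_compl (μ := μ) B hm hd
  conv_rhs => rw [← h]
  rw [integral_add_measure ?_ (hg.restrict)]
  · rw [integral_finset_sum_measure fun j _ => hg.restrict]
  · exact integrable_finset_sum_measure.mpr fun j _ => hg.restrict

end KantProof
namespace KantProof2
open KantProof
variable {X : Type*} [MetricSpace X] [MeasurableSpace X] [BorelSpace X]

lemma kant_term_le {μ₁ μ₂ : Measure X} {f : X → ℝ} (hf : LipschitzWith 1 f) :
    ENNReal.ofReal ((∫ x, f x ∂μ₁) - ∫ x, f x ∂μ₂) ≤ kantDist μ₁ μ₂ :=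
  le_iSup (fun g : {g : X → ℝ // LipschitzWith 1 g} =>
    ENNReal.ofReal ((∫ x, g.1 x ∂μ₁) - ∫ x, g.1 x ∂μ₂)) ⟨f, hf⟩

lemma lipschitz_add_const {f : X → ℝ} (hf : LipschitzWith 1 f) (c : ℝ) :
    LipschitzWith 1 fun x => f x + c := by
  refine LipschitzWith.of_dist_le_mul fun x y => ?_
  rw [dist_add_right]
  exact hf.dist_le_mul x y

/-- Membership in the Kantorovich ball around a finitely-supported measure forces
integrability of all `1`-Lipschitz functions. -/
lemma integrable_lipschitz_of_ball {μ' ν : Measure X} [IsProbabilityMeasure μ']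
    [IsProbabilityMeasure ν] {t : Finset X} (h0 : ν ((↑t : Set X)ᶜ) = 0)
    {ε : ℝ} (hε : 0 ≤ ε) (hb : kantDist μ' ν ≤ ENNReal.ofReal ε)
    {f : X → ℝ} (hf : LipschitzWith 1 f) : Integrable f μ' := by
  have hX : Nonempty X := nonempty_of_prob μ'
  obtain ⟨x₀⟩ := hX
  have hd : Integrable (fun x => dist x x₀) μ' := by
    by_contra hd
    set D := ∫ x, dist x x₀ ∂ν with hD
    set c := -D - (ε + 1) with hc
    have hg : LipschitzWith 1 fun x => dist x x₀ + c :=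
      lipschitz_add_const (LipschitzWith.dist_left x₀) c
    have hgnot : ¬ Integrable (fun x => dist x x₀ + c) μ' := by
      rw [integrable_add_const_iff]; exact hd
    have h1 : ∫ x, (dist x x₀ + c) ∂μ' = 0 := integral_undef hgnot
    have hdi : Integrable (fun x => dist x x₀) ν :=
      integrable_of_null_compl h0 _ ((LipschitzWith.dist_left x₀).continuous)
    have h2 : ∫ x, (dist x x₀ + c) ∂ν = D + c := by
      rw [integral_add hdi (integrable_const c), integral_const]
      simp [hD]
    have h3 := le_trans (kant_term_le (μ₁ := μ') (μ₂ := ν) hg) hb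
    rw [h1, h2] at h3
    have h4 : (0 : ℝ) - (D + c) = ε + 1 := by rw [hc]; ring
    rw [h4] at h3
    have := (ENNReal.ofReal_le_ofReal_iff hε).mp h3
    linarith
  refine Integrable.mono' (hd.add (integrable_const |f x₀|)) (hf.continuous.aestronglyMeasurable) ?_
  filter_upwards with x
  rw [Real.norm_eq_abs]
  calc |f x| ≤ |f x - f x₀| + |f x₀| := by
        have := abs_sub_abs_le_abs_sub (f x) (f x₀); nlinarith [abs_nonneg (f x - f x₀),
          abs_nonneg (f x₀), abs_abs (f x)]
    _ ≤ dist x x₀ + |f x₀| := by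
        have h := hf.dist_le_mul x x₀
        rw [Real.dist_eq] at h
        simpa using add_le_add_right (by simpa using h) |f x₀|

lemma ball_integral_le {μ' ν : Measure X} {ε : ℝ} (hε : 0 ≤ ε)
    (hb : kantDist μ' ν ≤ ENNReal.ofReal ε)
    {f : X → ℝ} (hf : LipschitzWith 1 f) :
    (∫ x, f x ∂μ') - ∫ x, f x ∂ν ≤ ε :=
  (ENNReal.ofReal_le_ofReal_iff hε).mp (le_trans (kant_term_le hf) hb)

/-- A finite infimum of 1-Lipschitz functions is 1-Lipschitz. -/
lemma lipschitz_inf' {ι : Type*} (s : Finset ι) (hs : s.Nonempty) (g : ι → X → ℝ)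
    (hg : ∀ i, LipschitzWith 1 (g i)) :
    LipschitzWith 1 fun x => s.inf' hs fun i => g i x := by
  induction hs using Finset.Nonempty.cons_induction with
  | singleton a => simpa using hg a
  | cons a s ha hs ih =>
      have : (fun x => (Finset.cons a s ha).inf' (Finset.cons_nonempty ha) fun i => g i x)
          = fun x => min (g a x) (s.inf' hs fun i => g i x) := by
        funext x; rw [Finset.inf'_cons]
      rw [this]
      simpa using (hg a).min ih

/-- Greedy measurable partition adapted to finitely many continuous "cost" functions. -/
lemma exists_min_partition {k : ℕ} (hk : 0 < k) (w : Fin k → X → ℝ)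
    (hw : ∀ i, Continuous (w i)) :
    ∃ A : Fin k → Set X, (∀ i, MeasurableSet (A i)) ∧
      Pairwise (Function.onFun Disjoint A) ∧ (⋃ i, A i) = univ ∧
      ∀ i, ∀ x ∈ A i, ∀ j, w i x ≤ w j x := by
  set M : Fin k → Set X := fun i => {x | ∀ j, w i x ≤ w j x} with hM
  have hMc : ∀ i, MeasurableSet (M i) := by
    intro i
    have : M i = ⋂ j, {x | w i x ≤ w j x} := by ext x; simp [hM]
    rw [this]
    exact MeasurableSet.iInter fun j => measurableSet_le (hw i).measurable (hw j).measurable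
  refine ⟨fun i => M i \ ⋃ j, ⋃ (_ : j < i), M j, fun i => (hMc i).diff
    (MeasurableSet.iUnion fun j => MeasurableSet.iUnion fun _ => hMc j), ?_, ?_, ?_⟩
  · intro i j hij
    rcases lt_or_gt_of_ne hij with h | h
    · refine Set.disjoint_left.mpr fun x hx hx' => ?_
      exact hx'.2 (Set.mem_iUnion.mpr ⟨i, Set.mem_iUnion.mpr ⟨h, hx.1⟩⟩)
    · refine Set.disjoint_left.mpr fun x hx hx' => ?_
      exact hx.2 (Set.mem_iUnion.mpr ⟨j, Set.mem_iUnion.mpr ⟨h, hx'.1⟩⟩)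
  · ext x
    simp only [Set.mem_iUnion, Set.mem_univ, iff_true]
    have hne : (Finset.univ.filter fun i => x ∈ M i).Nonempty := by
      obtain ⟨i₀, -, hi₀⟩ := Finset.exists_min_image Finset.univ (fun i => w i x)
        ⟨⟨0, hk⟩, Finset.mem_univ _⟩
      exact ⟨i₀, by simpa [hM] using fun j => hi₀ j (Finset.mem_univ j)⟩
    set i₁ := (Finset.univ.filter fun i => x ∈ M i).min' hne with hi₁
    have h₁ : x ∈ M i₁ := by
      have := (Finset.univ.filter fun i => x ∈ M i).min'_mem hne
      simpa [hi₁] using this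
    refine ⟨i₁, h₁, ?_⟩
    intro hx
    obtain ⟨j, hj⟩ := Set.mem_iUnion.mp hx
    obtain ⟨hji, hjM⟩ := Set.mem_iUnion.mp hj
    have : i₁ ≤ j := Finset.min'_le _ j (by simpa using hjM)
    exact absurd hji (not_lt.mpr this)
  · intro i x hx j
    exact hx.1 j

end KantProof2
namespace KantProof3
open KantProof TopologicalSpace
variable {X : Type*} [MetricSpace X] [MeasurableSpace X] [BorelSpace X]
  [SecondCountableTopology X]

/-- If a measure is not supported on `N` points, we can find `N+1` disjoint sets of
positive measure. -/
lemma exists_disjoint_pos {μ : Measure X} (N : ℕ) (hN : 1 ≤ N)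
    (h : ¬ FinitelySupported N μ) :
    ∃ B : Fin (N + 1) → Set X, (∀ j, MeasurableSet (B j)) ∧
      Pairwise (Function.onFun Disjoint B) ∧ ∀ j, 0 < μ (B j) := by
  classical
  set 𝒩 : Set (Set X) := {u ∈ countableBasis X | μ u = 0} with h𝒩
  have hN0 : μ (⋃₀ 𝒩) = 0 :=
    (measure_sUnion_null_iff ((countable_countableBasis X).mono
      (fun u hu => hu.1))).mpr fun u hu => hu.2
  set supp : Set X := (⋃₀ 𝒩)ᶜ with hsupp
  have hsupp_null : μ suppᶜ = 0 := by rwa [hsupp, compl_compl]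
  have hpos : ∀ x ∈ supp, ∀ U : Set X, IsOpen U → x ∈ U → 0 < μ U := by
    intro x hx U hU hxU
    obtain ⟨u, hub, hxu, huU⟩ :=
      (isBasis_countableBasis X).exists_subset_of_mem_open hxU hU
    rcases eq_or_ne (μ u) 0 with h0 | h0
    · exact absurd (Set.mem_sUnion.mpr ⟨u, Set.mem_sep hub h0, hxu⟩) hx
    · exact lt_of_lt_of_le (pos_iff_ne_zero.mpr h0) (measure_mono huU)
  have hbig : ∃ u : Finset X, ↑u ⊆ supp ∧ u.card = N + 1 := by
    by_cases hfin : supp.Finite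
    · rcases le_or_gt hfin.toFinset.card N with hle | hlt
      · exact absurd (⟨hfin.toFinset, hle, by rw [hfin.coe_toFinset]; exact hsupp_null⟩ : FinitelySupported N μ) h
      · obtain ⟨u, hsub, hcard⟩ := Finset.exists_subset_card_eq hlt
        exact ⟨u, by rw [← hfin.coe_toFinset]; exact_mod_cast hsub, hcard⟩
    · exact Set.Infinite.exists_subset_card_eq hfin (N + 1)
  obtain ⟨u, husub, hucard⟩ := hbig
  set x : Fin (N + 1) → X := fun j => (u.equivFin.symm (finCongr hucard.symm j) : X) with hx
  have hxinj : Function.Injective x := fun a b hab =>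
    (finCongr hucard.symm).injective (u.equivFin.symm.injective (Subtype.coe_injective hab))
  have hxsupp : ∀ j, x j ∈ supp := fun j => husub (u.equivFin.symm (finCongr hucard.symm j)).2
  set P : Finset (Fin (N + 1) × Fin (N + 1)) := Finset.univ.filter fun p => p.1 ≠ p.2 with hP
  have hPne : P.Nonempty := by
    refine ⟨(0, 1), ?_⟩
    simp only [hP, Finset.mem_filter, Finset.mem_univ, true_and]
    intro h01
    have : (0 : Fin (N + 1)).val = (1 : Fin (N + 1)).val := by rw [h01]
    simp [Fin.val_one, Nat.mod_eq_of_lt (by omega : 1 < N + 1)] at this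
  set δ : ℝ := P.inf' hPne fun p => dist (x p.1) (x p.2) with hδ
  have hδpos : 0 < δ := by
    rw [hδ, Finset.lt_inf'_iff]
    rintro ⟨a, b⟩ hab
    simp only [hP, Finset.mem_filter, Finset.mem_univ, true_and] at hab
    exact dist_pos.mpr fun hd => hab (hxinj hd)
  refine ⟨fun j => Metric.ball (x j) (δ / 3),
    fun j => Metric.isOpen_ball.measurableSet, ?_, ?_⟩
  · intro i j hij
    refine Set.disjoint_left.mpr fun z hzi hzj => ?_
    have h1 : dist (x i) (x j) ≤ dist (x i) z + dist z (x j) := dist_triangle _ _ _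
    have h2 : dist (x i) z < δ / 3 := by rwa [dist_comm, ← Metric.mem_ball]
    have h3 : dist z (x j) < δ / 3 := hzj
    have h4 : δ ≤ dist (x i) (x j) :=
      Finset.inf'_le _ (by simp [hP, hij] : (i, j) ∈ P)
    linarith
  · intro j
    exact hpos (x j) (hxsupp j) _ Metric.isOpen_ball
      (Metric.mem_ball_self (by linarith))

end KantProof3
namespace KantProof4
open KantProof KantProof2
variable {X : Type*} [MetricSpace X] [MeasurableSpace X] [BorelSpace X]

/-- Integration over a set, as an element of the weak-* dual of `L¹(μ)`. -/
noncomputable def intW (μ : Measure X) [IsProbabilityMeasure μ] (A : Set X) :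
    WeakDual ℝ (Lp ℝ 1 μ) :=
  LinearMap.mkContinuous
    { toFun := fun f => ∫ x in A, f x ∂μ
      map_add' := fun f g => by
        have h1 : (⇑(f + g) : X → ℝ) =ᵐ[μ.restrict A] ⇑f + ⇑g :=
          ae_restrict_of_ae (Lp.coeFn_add f g)
        show (∫ x in A, (f + g : Lp ℝ 1 μ) x ∂μ) = (∫ x in A, f x ∂μ) + ∫ x in A, g x ∂μ
        rw [integral_congr_ae h1]
        simp only [Pi.add_apply]
        rw [integral_add ((L1.integrable_coeFn f).restrict) ((L1.integrable_coeFn g).restrict)]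
      map_smul' := fun c f => by
        have h1 : (⇑(c • f) : X → ℝ) =ᵐ[μ.restrict A] c • ⇑f :=
          ae_restrict_of_ae (Lp.coeFn_smul c f)
        show (∫ x in A, (c • f : Lp ℝ 1 μ) x ∂μ) = c • ∫ x in A, f x ∂μ
        rw [integral_congr_ae h1]
        simp only [Pi.smul_apply]
        rw [integral_smul] }
    1 (fun f => by
      simp only [LinearMap.coe_mk, AddHom.coe_mk, one_mul]
      calc ‖∫ x in A, f x ∂μ‖ ≤ ∫ x in A, ‖f x‖ ∂μ := norm_integral_le_integral_norm _
        _ ≤ ∫ x, ‖f x‖ ∂μ := setIntegral_le_integral (L1.integrable_coeFn f).norm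
            (Filter.Eventually.of_forall fun x => norm_nonneg _)
        _ = ‖f‖ := (L1.norm_eq_integral_norm f).symm)

lemma intW_apply {μ : Measure X} [IsProbabilityMeasure μ] (A : Set X) (f : Lp ℝ 1 μ) :
    intW μ A f = ∫ x in A, f x ∂μ := rfl

variable {μ : Measure X} [IsProbabilityMeasure μ]

/-- The set of positive decompositions of the integration functional. -/
def Kset (μ : Measure X) [IsProbabilityMeasure μ] (k : ℕ) :
    Set (Fin k → WeakDual ℝ (Lp ℝ 1 μ)) :=
  {T | (∀ i (f : Lp ℝ 1 μ), 0 ≤ᵐ[μ] ⇑f → 0 ≤ T i f) ∧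
    ∀ f : Lp ℝ 1 μ, (∑ i, T i f) = ∫ x, f x ∂μ}

lemma Kset_norm_le {k : ℕ} {T : Fin k → WeakDual ℝ (Lp ℝ 1 μ)} (hT : T ∈ Kset μ k) (i : Fin k) :
    ‖WeakDual.toStrongDual (T i)‖ ≤ 1 := by
  refine ContinuousLinearMap.opNorm_le_bound _ zero_le_one fun f => ?_
  have habs : Integrable (fun x => |f x|) μ := (L1.integrable_coeFn f).abs
  set aE : Lp ℝ 1 μ := (memLp_one_iff_integrable.mpr habs).toLp _ with haE
  have hcoe : ⇑aE =ᵐ[μ] fun x => |f x| := (memLp_one_iff_integrable.mpr habs).coeFn_toLp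
  have h1 : T i f ≤ T i aE := by
    have := hT.1 i (aE - f) ?_
    · have heq : T i (aE - f) = T i aE - T i f := by
        rw [map_sub]
      linarith [heq ▸ this]
    · filter_upwards [Lp.coeFn_sub aE f, hcoe] with x hx hx'
      simp only [Pi.zero_apply, hx, Pi.sub_apply, hx']
      linarith [le_abs_self (f x)]
  have h2 : -(T i f) ≤ T i aE := by
    have := hT.1 i (aE + f) ?_
    · have heq : T i (aE + f) = T i aE + T i f := by rw [map_add]
      linarith [heq ▸ this]
    · filter_upwards [Lp.coeFn_add aE f, hcoe] with x hx hx'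
      simp only [Pi.zero_apply, hx, Pi.add_apply, hx']
      linarith [neg_abs_le (f x)]
  have h3 : T i aE ≤ ∑ j, T j aE := by
    refine Finset.single_le_sum (fun j _ => hT.1 j aE ?_) (Finset.mem_univ i)
    filter_upwards [hcoe] with x hx
    simp only [Pi.zero_apply, hx]; exact abs_nonneg _
  have h4 : (∑ j, T j aE) = ∫ x, |f x| ∂μ := by
    rw [hT.2 aE, integral_congr_ae hcoe]
  have h5 : ∫ x, |f x| ∂μ = ‖f‖ := by
    rw [L1.norm_eq_integral_norm]
    simp [Real.norm_eq_abs]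
  have habs' : |T i f| ≤ ‖f‖ := by
    rw [abs_le]; constructor <;> [linarith [h1, h3, h4.symm ▸ h5]; linarith]
  calc ‖T i f‖ = |T i f| := Real.norm_eq_abs _
    _ ≤ ‖f‖ := habs'
    _ = 1 * ‖f‖ := (one_mul _).symm

lemma Kset_isCompact (k : ℕ) : IsCompact (Kset μ k) := by
  have hb : IsCompact (Set.univ.pi fun _ : Fin k =>
      (WeakDual.toStrongDual ⁻¹' Metric.closedBall (0 : StrongDual ℝ (Lp ℝ 1 μ)) 1 : Set (WeakDual ℝ (Lp ℝ 1 μ)))) :=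
    isCompact_univ_pi fun _ => WeakDual.isCompact_closedBall (𝕜 := ℝ) (E := Lp ℝ 1 μ) 0 1
  refine IsCompact.of_isClosed_subset hb ?_ ?_
  · have h1 : IsClosed {T : Fin k → WeakDual ℝ (Lp ℝ 1 μ) |
        ∀ i (f : Lp ℝ 1 μ), 0 ≤ᵐ[μ] ⇑f → 0 ≤ T i f} := by
      have : {T : Fin k → WeakDual ℝ (Lp ℝ 1 μ) | ∀ i (f : Lp ℝ 1 μ), 0 ≤ᵐ[μ] ⇑f → 0 ≤ T i f}
          = ⋂ i, ⋂ f : Lp ℝ 1 μ, ⋂ (_ : 0 ≤ᵐ[μ] ⇑f), {T | 0 ≤ T i f} := by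
        ext T; simp only [Set.mem_setOf_eq, Set.mem_iInter]
      rw [this]
      refine isClosed_iInter fun i => isClosed_iInter fun f => isClosed_iInter fun _ => ?_
      exact isClosed_le continuous_const ((WeakDual.eval_continuous f).comp (continuous_apply i))
    have h2 : IsClosed {T : Fin k → WeakDual ℝ (Lp ℝ 1 μ) |
        ∀ f : Lp ℝ 1 μ, (∑ i, T i f) = ∫ x, f x ∂μ} := by
      have : {T : Fin k → WeakDual ℝ (Lp ℝ 1 μ) | ∀ f : Lp ℝ 1 μ, (∑ i, T i f) = ∫ x, f x ∂μ}
          = ⋂ f : Lp ℝ 1 μ, {T | (∑ i, T i f) = ∫ x, f x ∂μ} := by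
        ext T; simp only [Set.mem_setOf_eq, Set.mem_iInter]
      rw [this]
      refine isClosed_iInter fun f => isClosed_eq ?_ continuous_const
      exact continuous_finset_sum _ fun i _ =>
        (WeakDual.eval_continuous f).comp (continuous_apply i)
    exact h1.inter h2
  · intro T hT
    simp only [Set.mem_pi, Set.mem_univ, true_implies, Set.mem_preimage,
      Metric.mem_closedBall, dist_zero_right]
    intro i
    simpa using Kset_norm_le hT i

end KantProof4

namespace KantProof5
open KantProof KantProof2 KantProof4
variable {X : Type*} [MetricSpace X] [MeasurableSpace X] [BorelSpace X]
variable {μ : Measure X} [IsProbabilityMeasure μ]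

set_option maxHeartbeats 1000000 in
lemma exists_good_T {k : ℕ} (hk : 0 < k) (y : Fin k → X) (m : Fin k → ℝ)
    (hm0 : ∀ i, 0 ≤ m i) (hm1 : ∑ i, m i = 1) {ε : ℝ}
    (hint : ∀ f : X → ℝ, LipschitzWith 1 f → Integrable f μ)
    (hball : ∀ f : X → ℝ, LipschitzWith 1 f → (∫ x, f x ∂μ) - ∑ i, m i * f (y i) ≤ ε) :
    ∃ T ∈ Kset μ k,
      (∀ i, T i ((memLp_one_iff_integrable.mpr (integrable_const (1:ℝ))).toLp
        (fun _ => (1:ℝ))) = m i) ∧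
      (∑ i, T i ((memLp_one_iff_integrable.mpr
        (hint _ (LipschitzWith.dist_left (y i)))).toLp (fun x => dist x (y i))) ≤ ε) := by
  classical
  set oneE : Lp ℝ 1 μ :=
    (memLp_one_iff_integrable.mpr (integrable_const (1:ℝ))).toLp (fun _ => (1:ℝ)) with honeE
  have hone : ⇑oneE =ᵐ[μ] fun _ => (1:ℝ) :=
    (memLp_one_iff_integrable.mpr (integrable_const (1:ℝ))).coeFn_toLp
  set dE : Fin k → Lp ℝ 1 μ := fun i =>
    (memLp_one_iff_integrable.mpr (hint _ (LipschitzWith.dist_left (y i)))).toLp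
      (fun x => dist x (y i)) with hdEdef
  have hdE : ∀ i, ⇑(dE i) =ᵐ[μ] fun x => dist x (y i) := fun i =>
    (memLp_one_iff_integrable.mpr (hint _ (LipschitzWith.dist_left (y i)))).coeFn_toLp
  set φ : (Fin k → WeakDual ℝ (Lp ℝ 1 μ)) → ((Fin k → ℝ) × ℝ) :=
    fun T => (fun i => T i oneE, ∑ i, T i (dE i)) with hφdef
  have hφc : Continuous φ := by
    refine Continuous.prodMk (continuous_pi fun i => ?_) ?_
    · exact (WeakDual.eval_continuous oneE).comp (continuous_apply i)
    · exact continuous_finset_sum _ fun i _ =>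
        (WeakDual.eval_continuous (dE i)).comp (continuous_apply i)
  set S : Set ((Fin k → ℝ) × ℝ) := φ '' Kset μ k with hSdef
  have hScomp : IsCompact S := (Kset_isCompact k).image hφc
  have happly : ∀ (a b : ℝ) (T T' : Fin k → WeakDual ℝ (Lp ℝ 1 μ)) (i : Fin k)
      (f : Lp ℝ 1 μ), (a • T + b • T') i f = a * T i f + b * T' i f := fun _ _ _ _ _ _ => rfl
  have hKconv : ∀ T ∈ Kset μ k, ∀ T' ∈ Kset μ k, ∀ a b : ℝ, 0 ≤ a → 0 ≤ b → a + b = 1 →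
      (a • T + b • T') ∈ Kset μ k := by
    intro T hT T' hT' a b ha hb hab
    constructor
    · intro i f hf
      rw [happly]
      have h1 := hT.1 i f hf
      have h2 := hT'.1 i f hf
      positivity
    · intro f
      rw [Finset.sum_congr rfl fun i _ => happly a b T T' i f, Finset.sum_add_distrib,
        ← Finset.mul_sum, ← Finset.mul_sum, hT.2 f, hT'.2 f]
      have : a * (∫ x, f x ∂μ) + b * ∫ x, f x ∂μ = (a + b) * ∫ x, f x ∂μ := by ring
      rw [this, hab, one_mul]
  have hSconv : Convex ℝ S := by
    rintro z ⟨T, hT, rfl⟩ z' ⟨T', hT', rfl⟩ a b ha hb hab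
    refine ⟨a • T + b • T', hKconv T hT T' hT' a b ha hb hab, ?_⟩
    have h1 : (fun i => (a • T + b • T') i oneE)
        = a • (fun i => T i oneE) + b • (fun i => T' i oneE) := by
      funext i
      exact happly a b T T' i oneE
    have h2 : (∑ i, (a • T + b • T') i (dE i))
        = a * (∑ i, T i (dE i)) + b * ∑ i, T' i (dE i) := by
      rw [Finset.sum_congr rfl fun i _ => happly a b T T' i (dE i), Finset.sum_add_distrib,
        ← Finset.mul_sum, ← Finset.mul_sum]
    show ((fun i => (a • T + b • T') i oneE), ∑ i, (a • T + b • T') i (dE i))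
        = a • φ T + b • φ T'
    rw [h1, h2]
    rfl
  set R : Set ((Fin k → ℝ) × ℝ) := {p | p.1 = m ∧ p.2 ≤ ε} with hRdef
  have hRconv : Convex ℝ R := by
    rintro p ⟨hp1, hp2⟩ q ⟨hq1, hq2⟩ a b ha hb hab
    constructor
    · show a • p.1 + b • q.1 = m
      rw [hp1, hq1, ← add_smul, hab, one_smul]
    · show a * p.2 + b * q.2 ≤ ε
      have h1 := mul_le_mul_of_nonneg_left hp2 ha
      have h2 := mul_le_mul_of_nonneg_left hq2 hb
      have h3 : a * ε + b * ε = ε := by rw [← add_mul, hab, one_mul]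
      linarith
  have hRclosed : IsClosed R :=
    (isClosed_eq continuous_fst continuous_const).inter
      (isClosed_le continuous_snd continuous_const)
  by_contra hcon
  push_neg at hcon
  have hdisj : Disjoint S R := by
    rw [Set.disjoint_left]
    rintro z ⟨T, hT, rfl⟩ ⟨hz1, hz2⟩
    have h1 : ∀ i, T i oneE = m i := fun i => congrFun hz1 i
    exact absurd (hcon T hT h1) (not_lt.mpr hz2)
  obtain ⟨ψ, u, v, hSψ, huv, hRψ⟩ :=
    geometric_hahn_banach_compact_closed hSconv hScomp hRconv hRclosed hdisj
  set α : Fin k → ℝ := fun i => ψ ((Pi.single i 1 : Fin k → ℝ), (0:ℝ)) with hα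
  set β : ℝ := ψ ((0 : Fin k → ℝ), (1:ℝ)) with hβ
  have hψ : ∀ z : (Fin k → ℝ) × ℝ, ψ z = (∑ i, z.1 i * α i) + z.2 * β := by
    intro z
    have hz : z = (∑ i, z.1 i • ((Pi.single i 1 : Fin k → ℝ), (0:ℝ)))
        + z.2 • ((0 : Fin k → ℝ), (1:ℝ)) := by
      refine Prod.ext ?_ ?_
      · simp only [Prod.fst_add, Prod.fst_sum, Prod.smul_mk, Prod.smul_fst]
        have h1 : ∀ i : Fin k, z.1 i • (Pi.single i (1:ℝ) : Fin k → ℝ)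
            = Pi.single i (z.1 i) := by
          intro i
          funext j
          by_cases h : j = i
          · subst h; simp
          · simp [Pi.single_apply, h]
        rw [Finset.sum_congr rfl fun i _ => h1 i, Finset.univ_sum_single]
        simp
      · simp only [Prod.snd_add, Prod.snd_sum, Prod.smul_snd, smul_eq_mul, mul_zero,
          mul_one, Finset.sum_const_zero, zero_add]
    calc ψ z = ψ ((∑ i, z.1 i • ((Pi.single i 1 : Fin k → ℝ), (0:ℝ)))
          + z.2 • ((0 : Fin k → ℝ), (1:ℝ))) := by rw [← hz]
      _ = (∑ i, z.1 i * α i) + z.2 * β := by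
          rw [map_add, map_sum]
          simp only [_root_.map_smul, smul_eq_mul]
          rfl
  have hβle : β ≤ 0 := by
    by_contra hβpos
    push_neg at hβpos
    set τ : ℝ := max (((∑ i, m i * α i) + ε * β - v) / β) 0 with hτ
    have hτ0 : 0 ≤ τ := le_max_right _ _
    have hmem : ((m : Fin k → ℝ), ε - τ) ∈ R := ⟨rfl, show ε - τ ≤ ε by linarith⟩
    have hthis := hRψ _ hmem
    have hval : ψ ((m : Fin k → ℝ), ε - τ) = (∑ i, m i * α i) + (ε - τ) * β := hψ _
    rw [hval] at hthis
    have hτge : ((∑ i, m i * α i) + ε * β - v) / β ≤ τ := le_max_left _ _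
    rw [div_le_iff₀ hβpos] at hτge
    have hexp : (ε - τ) * β = ε * β - τ * β := by ring
    rw [hexp] at hthis
    linarith
  rcases lt_or_eq_of_le hβle with hβneg | hβ0
  · -- case β < 0
    set η : Fin k → ℝ := fun i => α i / (-β) with hη
    have hβne : -β ≠ 0 := by linarith
    have hαη : ∀ i, α i = η i * (-β) := fun i => (div_mul_cancel₀ (α i) hβne).symm
    obtain ⟨A, hAm, hAd, hAc, hAmin⟩ := exists_min_partition hk
      (fun i x => dist x (y i) - η i)
      (fun i => ((LipschitzWith.dist_left (y i)).continuous).sub continuous_const)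
    set T : Fin k → WeakDual ℝ (Lp ℝ 1 μ) := fun i => intW μ (A i) with hTdef
    have hTK : T ∈ Kset μ k := by
      constructor
      · intro i f hf
        exact integral_nonneg_of_ae (ae_restrict_of_ae hf)
      · intro f
        have h := sum_setIntegral_eq A hAm hAd (L1.integrable_coeFn f)
        rw [hAc, Set.compl_univ, Measure.restrict_empty, integral_zero_measure,
          add_zero] at h
        exact h
    have hT1 : ∀ i, T i oneE = (μ (A i)).toReal := by
      intro i
      show (∫ x in A i, oneE x ∂μ) = (μ (A i)).toReal
      rw [integral_congr_ae (ae_restrict_of_ae hone), integral_const]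
      simp [Measure.restrict_apply_univ]
      rfl
    have hT2 : ∀ i, T i (dE i) = ∫ x in A i, dist x (y i) ∂μ := fun i =>
      integral_congr_ae (ae_restrict_of_ae (hdE i))
    set F : X → ℝ := fun x =>
      Finset.univ.inf' ⟨⟨0, hk⟩, Finset.mem_univ _⟩ fun i => dist x (y i) - η i with hF
    have hFlip : LipschitzWith 1 F := by
      refine lipschitz_inf' _ _ _ fun i => ?_
      simpa [sub_eq_add_neg] using
        lipschitz_add_const (LipschitzWith.dist_left (y i)) (-η i)
    have hFint : Integrable F μ := hint F hFlip
    have hFA : ∀ i, ∀ x ∈ A i, F x = dist x (y i) - η i := by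
      intro i x hx
      refine le_antisymm (Finset.inf'_le _ (Finset.mem_univ i)) ?_
      exact Finset.le_inf' _ _ fun j _ => hAmin i x hx j
    have hFset : ∀ i, (∫ x in A i, F x ∂μ) = ∫ x in A i, (dist x (y i) - η i) ∂μ := by
      intro i
      exact setIntegral_congr_fun (hAm i) fun x hx => hFA i x hx
    have hsplit : ∀ i, (∫ x in A i, (dist x (y i) - η i) ∂μ)
        = (∫ x in A i, dist x (y i) ∂μ) - η i * (μ (A i)).toReal := by
      intro i
      rw [integral_sub ((hint _ (LipschitzWith.dist_left (y i))).restrict)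
        (integrable_const _), integral_const]
      simp [Measure.restrict_apply_univ, mul_comm, measureReal_def]
    have hsumF : (∑ i, ∫ x in A i, F x ∂μ) = ∫ x, F x ∂μ := by
      have h := sum_setIntegral_eq A hAm hAd hFint
      rwa [hAc, Set.compl_univ, Measure.restrict_empty, integral_zero_measure,
        add_zero] at h
    have hcalc : ψ (φ T) = β * ∫ x, F x ∂μ := by
      rw [hψ]
      have hterm : ∀ i, (φ T).1 i * α i + T i (dE i) * β = β * ∫ x in A i, F x ∂μ := by
        intro i
        have h1 : (φ T).1 i = (μ (A i)).toReal := hT1 i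
        rw [h1, hT2 i, hFset i, hsplit i, hαη i]
        ring
      have hφ2 : (φ T).2 = ∑ i, T i (dE i) := rfl
      rw [hφ2, Finset.sum_mul, ← Finset.sum_add_distrib]
      rw [Finset.sum_congr rfl fun i _ => hterm i, ← Finset.mul_sum, hsumF]
    have hS1 : ψ (φ T) < u := hSψ _ ⟨T, hTK, rfl⟩
    have hR1 : v < ψ ((m : Fin k → ℝ), ε) := hRψ _ ⟨rfl, le_refl _⟩
    have hvalR : ψ ((m : Fin k → ℝ), ε) = (∑ i, m i * α i) + ε * β := hψ _
    rw [hvalR] at hR1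
    have hFy : ∀ i, F (y i) ≤ -η i := by
      intro i
      have h := Finset.inf'_le (s := (Finset.univ : Finset (Fin k)))
        (fun j => dist (y i) (y j) - η j) (Finset.mem_univ i)
      simp only [dist_self, zero_sub] at h
      exact h
    have hFb : (∫ x, F x ∂μ) ≤ ε + ∑ i, m i * (-η i) := by
      have h1 := hball F hFlip
      have h2 : (∑ i, m i * F (y i)) ≤ ∑ i, m i * (-η i) :=
        Finset.sum_le_sum fun i _ => mul_le_mul_of_nonneg_left (hFy i) (hm0 i)
      linarith
    have hmα : (∑ i, m i * α i) = (-β) * ∑ i, m i * η i := by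
      rw [Finset.mul_sum]
      refine Finset.sum_congr rfl fun i _ => ?_
      rw [hαη i]; ring
    have hsumneg : (∑ i, m i * (-η i)) = -∑ i, m i * η i := by
      rw [← Finset.sum_neg_distrib]
      exact Finset.sum_congr rfl fun i _ => by ring
    have hkey : β * (ε - ∑ i, m i * η i) ≤ β * ∫ x, F x ∂μ := by
      apply mul_le_mul_of_nonpos_left _ hβle
      rw [hsumneg] at hFb
      linarith
    rw [hcalc] at hS1
    rw [hmα] at hR1
    nlinarith
  · -- case β = 0
    obtain ⟨i₀, -, hi₀⟩ := Finset.exists_max_image Finset.univ α ⟨⟨0, hk⟩, Finset.mem_univ _⟩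
    set T : Fin k → WeakDual ℝ (Lp ℝ 1 μ) := fun i => if i = i₀ then intW μ Set.univ else 0
      with hTdef
    have hTval : ∀ (f : Lp ℝ 1 μ) (i : Fin k),
        T i f = if i = i₀ then ∫ x, f x ∂μ else 0 := by
      intro f i
      by_cases h : i = i₀
      · simp [hTdef, h, intW_apply, Measure.restrict_univ]
      · simp only [hTdef, if_neg h]
        rfl
    have hTK : T ∈ Kset μ k := by
      constructor
      · intro i f hf
        rw [hTval]
        split
        · exact integral_nonneg_of_ae hf
        · exact le_rfl
      · intro f
        rw [Finset.sum_congr rfl fun i _ => hTval f i,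
          Finset.sum_ite_eq' Finset.univ i₀ (fun _ => ∫ x, f x ∂μ)]
        simp
    have hone_int : (∫ x, oneE x ∂μ) = 1 := by
      rw [integral_congr_ae hone]
      simp
    have hS1 : ψ (φ T) < u := hSψ _ ⟨T, hTK, rfl⟩
    have hR1 : v < ψ ((m : Fin k → ℝ), ε) := hRψ _ ⟨rfl, le_refl _⟩
    have hvalS : ψ (φ T) = (∑ i, (φ T).1 i * α i) + (φ T).2 * β := hψ _
    have hvalR : ψ ((m : Fin k → ℝ), ε) = (∑ i, m i * α i) + ε * β := hψ _
    rw [hvalS] at hS1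
    rw [hvalR] at hR1
    have hφT1 : ∀ i, (φ T).1 i = if i = i₀ then (1:ℝ) else 0 := by
      intro i
      show T i oneE = _
      rw [hTval]
      by_cases h : i = i₀ <;> simp [h, hone_int]
    have hsum1 : (∑ i, (φ T).1 i * α i) = α i₀ := by
      rw [Finset.sum_congr rfl fun i _ => by rw [hφT1 i, ite_mul]]
      simp
    have hsum2 : (∑ i, m i * α i) ≤ α i₀ := by
      calc (∑ i, m i * α i) ≤ ∑ i, m i * α i₀ :=
            Finset.sum_le_sum fun i _ =>
              mul_le_mul_of_nonneg_left (hi₀ i (Finset.mem_univ i)) (hm0 i)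
        _ = α i₀ := by rw [← Finset.sum_mul, hm1, one_mul]
    rw [hsum1, hβ0] at hS1
    rw [hβ0] at hR1
    simp only [mul_zero, add_zero] at hS1 hR1
    linarith

end KantProof5
namespace KantProof6
open KantProof
variable {X : Type*} [MetricSpace X] [MeasurableSpace X] [BorelSpace X]
variable {μ : Measure X} [IsProbabilityMeasure μ]

/-- Evaluation of a functional on `L¹(μ)` at an integrable function. -/
noncomputable def lam (T : WeakDual ℝ (Lp ℝ 1 μ)) (g : X → ℝ) : ℝ :=
  @dite _ (Integrable g μ) (Classical.dec _)
    (fun h => T ((memLp_one_iff_integrable.mpr h).toLp g)) (fun _ => 0)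

lemma lam_of_int (T : WeakDual ℝ (Lp ℝ 1 μ)) {g : X → ℝ} (h : Integrable g μ) :
    lam T g = T ((memLp_one_iff_integrable.mpr h).toLp g) := by
  rw [lam, dif_pos h]

lemma lam_congr (T : WeakDual ℝ (Lp ℝ 1 μ)) {f g : X → ℝ} (hfg : f =ᵐ[μ] g) :
    lam T f = lam T g := by
  by_cases h : Integrable f μ
  · have h' : Integrable g μ := h.congr hfg
    rw [lam_of_int T h, lam_of_int T h',
      MemLp.toLp_congr (memLp_one_iff_integrable.mpr h) (memLp_one_iff_integrable.mpr h') hfg]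
  · have h' : ¬ Integrable g μ := fun hg => h (hg.congr hfg.symm)
    rw [lam, dif_neg h, lam, dif_neg h']

lemma lam_add (T : WeakDual ℝ (Lp ℝ 1 μ)) {f g : X → ℝ} (hf : Integrable f μ)
    (hg : Integrable g μ) : lam T (f + g) = lam T f + lam T g := by
  rw [lam_of_int T (hf.add hg), lam_of_int T hf, lam_of_int T hg, ← map_add]
  exact congrArg T (MemLp.toLp_add _ _)

lemma lam_smul (T : WeakDual ℝ (Lp ℝ 1 μ)) {g : X → ℝ} (c : ℝ) (hg : Integrable g μ) :
    lam T (c • g) = c * lam T g := by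
  rw [lam_of_int T (hg.smul c), lam_of_int T hg]
  have h1 : (memLp_one_iff_integrable.mpr (hg.smul c)).toLp (c • g)
      = c • (memLp_one_iff_integrable.mpr hg).toLp g := MemLp.toLp_const_smul c _
  rw [h1]
  have h2 : T (c • (memLp_one_iff_integrable.mpr hg).toLp g)
      = c • T ((memLp_one_iff_integrable.mpr hg).toLp g) := _root_.map_smul T c _
  rw [h2, smul_eq_mul]

lemma lam_zero (T : WeakDual ℝ (Lp ℝ 1 μ)) : lam T (0 : X → ℝ) = 0 := by
  rw [lam_of_int T (show Integrable (0 : X → ℝ) μ from integrable_zero _ _ μ)]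
  have h1 : (memLp_one_iff_integrable.mpr (integrable_zero _ _ μ)).toLp (0 : X → ℝ) = 0 :=
    MemLp.toLp_zero _
  rw [h1, map_zero]

lemma lam_sum (T : WeakDual ℝ (Lp ℝ 1 μ)) {ι : Type*} (s : Finset ι) (g : ι → X → ℝ)
    (hg : ∀ j ∈ s, Integrable (g j) μ) :
    lam T (∑ j ∈ s, g j) = ∑ j ∈ s, lam T (g j) := by
  classical
  induction s using Finset.induction_on with
  | empty => simpa using lam_zero T
  | insert a s' hnotmem ih =>
      have hfun : (∑ j ∈ s', g j) = fun z => ∑ j ∈ s', g j z := by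
        funext z; simp
      have hsint : Integrable (∑ j ∈ s', g j) μ := by
        rw [hfun]
        exact integrable_finset_sum s' fun j hj => hg j (Finset.mem_insert_of_mem hj)
      rw [Finset.sum_insert hnotmem, Finset.sum_insert hnotmem,
        lam_add T (hg a (Finset.mem_insert_self a s')) hsint,
        ih fun j hj => hg j (Finset.mem_insert_of_mem hj)]

lemma lam_nonneg {T : WeakDual ℝ (Lp ℝ 1 μ)}
    (hpos : ∀ f : Lp ℝ 1 μ, 0 ≤ᵐ[μ] ⇑f → 0 ≤ T f) {g : X → ℝ}
    (hg : Integrable g μ) (h0 : 0 ≤ᵐ[μ] g) : 0 ≤ lam T g := by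
  rw [lam_of_int T hg]
  refine hpos _ ?_
  filter_upwards [(memLp_one_iff_integrable.mpr hg).coeFn_toLp, h0] with x hx hx'
  rw [hx]
  exact hx'

lemma lam_mono {T : WeakDual ℝ (Lp ℝ 1 μ)}
    (hpos : ∀ f : Lp ℝ 1 μ, 0 ≤ᵐ[μ] ⇑f → 0 ≤ T f) {u v : X → ℝ}
    (hu : Integrable u μ) (hv : Integrable v μ) (huv : u ≤ᵐ[μ] v) :
    lam T u ≤ lam T v := by
  have hvu : Integrable (v - u) μ := hv.sub hu
  have hsum : u + (v - u) = v := by funext x; simp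
  have h1 : lam T v = lam T u + lam T (v - u) := by
    rw [← hsum, lam_add T hu hvu]
    rw [hsum]
  have h2 : 0 ≤ lam T (v - u) := by
    refine lam_nonneg hpos hvu ?_
    filter_upwards [huv] with x hx
    simp only [Pi.sub_apply, Pi.zero_apply]
    linarith
  linarith

end KantProof6
namespace KantMain
open KantProof KantProof2 KantProof3 KantProof4 KantProof5 KantProof6

set_option maxHeartbeats 2000000 in
theorem main_thm {X : Type*} [MetricSpace X] [MeasurableSpace X] [BorelSpace X]
    [SecondCountableTopology X] (n : ℕ)
    (μn : ProbabilityMeasure X) (hμn : FinitelySupported n (μn : Measure X))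
    (ε : ℝ) (hε : 0 < ε) (μ : ProbabilityMeasure X)
    (hμ : IsExtremePt {μ' : ProbabilityMeasure X |
      kantDist (μ' : Measure X) (μn : Measure X) ≤ ENNReal.ofReal ε} μ) :
    FinitelySupported (n + 2) (μ : Measure X) := by
  classical
  by_contra hns
  obtain ⟨t, htn, ht0⟩ := hμn
  set ν : Measure X := (μn : Measure X) with hν
  set μm : Measure X := (μ : Measure X) with hμm
  have hselfmem : μ ∈ {μ' : ProbabilityMeasure X |
      kantDist (μ' : Measure X) (μn : Measure X) ≤ ENNReal.ofReal ε} := hμ.1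
  have hself : kantDist μm ν ≤ ENNReal.ofReal ε := hselfmem
  -- basic setup of the atoms of ν
  have htne : t.Nonempty := by
    rcases t.eq_empty_or_nonempty with rfl | h
    · exfalso
      have h1 : ν Set.univ = 0 := by simpa using ht0
      rw [measure_univ] at h1
      exact one_ne_zero h1
    · exact h
  set k := t.card with hkdef
  have hk : 0 < k := Finset.card_pos.mpr htne
  set e : Fin k → {z // z ∈ t} := fun i => t.equivFin.symm i with he
  set y : Fin k → X := fun i => (e i : X) with hy
  set m : Fin k → ℝ := fun i => (ν {y i}).toReal with hm
  have hm0 : ∀ i, 0 ≤ m i := fun i => ENNReal.toReal_nonneg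
  have hsum_reindex : ∀ g : X → ℝ,
      (∑ z ∈ t, (ν {z}).toReal * g z) = ∑ i, m i * g (y i) := by
    intro g
    have h1 : (∑ i, m i * g (y i))
        = ∑ a : {z // z ∈ t}, (ν {(a : X)}).toReal * g (a : X) :=
      Equiv.sum_comp t.equivFin.symm fun a => (ν {(a : X)}).toReal * g (a : X)
    rw [h1, Finset.univ_eq_attach, Finset.sum_attach t fun z => (ν {z}).toReal * g z]
  have hνint : ∀ g : X → ℝ, Continuous g → ∫ x, g x ∂ν = ∑ i, m i * g (y i) := by
    intro g hg
    rw [integral_eq_sum ht0 g hg, hsum_reindex g]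
  have hm1 : (∑ i, m i) = 1 := by
    have h1 := hνint (fun _ => (1:ℝ)) continuous_const
    rw [integral_const] at h1
    simpa using h1.symm
  have hint : ∀ f : X → ℝ, LipschitzWith 1 f → Integrable f μm :=
    fun f hf => integrable_lipschitz_of_ball ht0 hε.le hself hf
  have hball : ∀ f : X → ℝ, LipschitzWith 1 f →
      (∫ x, f x ∂μm) - ∑ i, m i * f (y i) ≤ ε := by
    intro f hf
    have h1 := ball_integral_le hε.le hself hf
    rwa [hνint f hf.continuous] at h1
  -- the dual decomposition
  obtain ⟨T, hTK, hTmass, hTcost⟩ := exists_good_T hk y m hm0 hm1 hint hball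
  have hpos : ∀ i (f : Lp ℝ 1 μm), 0 ≤ᵐ[μm] ⇑f → 0 ≤ T i f := hTK.1
  have hΛsum : ∀ g : X → ℝ, (hg : Integrable g μm) →
      (∑ i, lam (T i) g) = ∫ x, g x ∂μm := by
    intro g hg
    rw [Finset.sum_congr rfl fun i _ => lam_of_int (T i) hg, hTK.2]
    exact integral_congr_ae (memLp_one_iff_integrable.mpr hg).coeFn_toLp
  have hΛone : ∀ i, lam (T i) (fun _ => (1:ℝ)) = m i := by
    intro i
    rw [lam_of_int (T i) (integrable_const (1:ℝ))]
    exact hTmass i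
  have hΛdist : (∑ i, lam (T i) (fun x => dist x (y i))) ≤ ε := by
    have h1 : ∀ i, lam (T i) (fun x => dist x (y i))
        = T i ((memLp_one_iff_integrable.mpr
            (hint _ (LipschitzWith.dist_left (y i)))).toLp (fun x => dist x (y i))) :=
      fun i => lam_of_int (T i) (hint _ (LipschitzWith.dist_left (y i)))
    rw [Finset.sum_congr rfl fun i _ => h1 i]
    exact hTcost
  -- disjoint positive-measure sets from non-finite-support
  obtain ⟨B, hBm, hBd, hBpos⟩ := exists_disjoint_pos (n + 2) (by omega) hns
  -- kernel vector
  set q : Fin (n + 2 + 1) → Fin k → ℝ :=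
    fun j i => lam (T i) ((B j).indicator fun _ => (1:ℝ)) with hq
  set r : Fin (n + 2 + 1) → ℝ :=
    fun j => ∑ i, lam (T i) ((B j).indicator fun x => dist x (y i)) with hr
  set LM : (Fin (n + 2 + 1) → ℝ) →ₗ[ℝ] ((Fin k → ℝ) × ℝ) :=
    { toFun := fun c => (fun i => ∑ j, c j * q j i, ∑ j, c j * r j)
      map_add' := fun c c' => by
        refine Prod.ext ?_ ?_
        · funext i
          simp only [Prod.fst_add, Pi.add_apply]
          rw [← Finset.sum_add_distrib]
          exact Finset.sum_congr rfl fun j _ => by ring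
        · simp only [Prod.snd_add, Pi.add_apply]
          rw [← Finset.sum_add_distrib]
          exact Finset.sum_congr rfl fun j _ => by ring
      map_smul' := fun a c => by
        refine Prod.ext ?_ ?_
        · funext i
          simp only [RingHom.id_apply, Prod.smul_fst, Pi.smul_apply, smul_eq_mul]
          rw [Finset.mul_sum]
          exact Finset.sum_congr rfl fun j _ => by ring
        · simp only [RingHom.id_apply, Prod.smul_snd, Pi.smul_apply, smul_eq_mul]
          rw [Finset.mul_sum]
          exact Finset.sum_congr rfl fun j _ => by ring }
    with hLM
  have hker : LinearMap.ker LM ≠ ⊥ := by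
    refine LinearMap.ker_ne_bot_of_finrank_lt ?_
    have h1 : Module.finrank ℝ (Fin (n + 2 + 1) → ℝ) = n + 2 + 1 := by
      simp [Module.finrank_pi]
    have h2 : Module.finrank ℝ ((Fin k → ℝ) × ℝ) = k + 1 := by
      simp [Module.finrank_prod, Module.finrank_pi]
    rw [h1, h2]
    omega
  obtain ⟨c0, hc0ker, hc0ne⟩ := (Submodule.ne_bot_iff _).mp hker
  set mx : ℝ := Finset.univ.sup' ⟨0, Finset.mem_univ _⟩ fun j => |c0 j| with hmx
  have hmxpos : 0 < mx := by
    obtain ⟨j₁, hj₁⟩ := Function.ne_iff.mp hc0ne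
    calc (0:ℝ) < |c0 j₁| := abs_pos.mpr (by simpa using hj₁)
      _ ≤ mx := Finset.le_sup' (f := fun j => |c0 j|) (Finset.mem_univ j₁)
  set c : Fin (n + 2 + 1) → ℝ := fun j => c0 j / (2 * mx) with hc
  have hc_le : ∀ j, |c j| ≤ 1 / 2 := by
    intro j
    rw [hc]
    rw [abs_div, abs_of_pos (by linarith : (0:ℝ) < 2 * mx)]
    rw [div_le_div_iff₀ (by linarith) (by norm_num)]
    have := Finset.le_sup' (fun j => |c0 j|) (Finset.mem_univ j)
    nlinarith
  obtain ⟨j₁, hj₁⟩ := Function.ne_iff.mp hc0ne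
  have hcj : c j₁ ≠ 0 := by
    rw [hc]
    exact div_ne_zero (by simpa using hj₁) (by positivity)
  have hcker : LM c = 0 := by
    have h1 : c = (2 * mx)⁻¹ • c0 := by
      funext j
      rw [hc, Pi.smul_apply, smul_eq_mul]
      ring
    rw [h1, LinearMap.map_smul, hc0ker, smul_zero]
  have hmass : ∀ i, (∑ j, c j * q j i) = 0 := by
    intro i
    have h1 := congrArg Prod.fst hcker
    exact congrFun h1 i
  have hcost : (∑ j, c j * r j) = 0 := congrArg Prod.snd hcker
  -- indicator helpers
  have hlam_ind_sum : ∀ (g : X → ℝ), Integrable g μm → ∀ (j : Fin (n + 2 + 1)),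
      (∑ i, lam (T i) ((B j).indicator g)) = ∫ x in B j, g x ∂μm := by
    intro g hg j
    rw [hΛsum _ (hg.indicator (hBm j)), integral_indicator (hBm j)]
  have hqsum : ∀ j, (∑ i, q j i) = (μm (B j)).toReal := by
    intro j
    have h1 := hlam_ind_sum (fun _ => (1:ℝ)) (integrable_const 1) j
    rw [hq]
    rw [h1, setIntegral_const]
    simp [measureReal_def]
  have hsum_cb : (∑ j, c j * (μm (B j)).toReal) = 0 := by
    have h1 : (∑ j, c j * (μm (B j)).toReal) = ∑ j, ∑ i, c j * q j i := by
      refine Finset.sum_congr rfl fun j _ => ?_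
      rw [← hqsum j, Finset.mul_sum]
    rw [h1, Finset.sum_comm]
    rw [Finset.sum_congr rfl fun i (_ : i ∈ Finset.univ) => hmass i]
    simp
  have hindsum_bound : ∀ x, |∑ j, c j * (B j).indicator (fun _ => (1:ℝ)) x| ≤ 1 / 2 := by
    intro x
    by_cases hx : ∃ j, x ∈ B j
    · obtain ⟨j₀, hj₀⟩ := hx
      have h1 : (∑ j, c j * (B j).indicator (fun _ => (1:ℝ)) x) = c j₀ := by
        rw [Finset.sum_eq_single j₀]
        · simp [Set.indicator_of_mem hj₀]
        · intro j _ hne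
          have hxj : x ∉ B j := fun hxj => Set.disjoint_left.mp (hBd hne) hxj hj₀
          simp [Set.indicator_of_notMem hxj]
        · intro h
          exact absurd (Finset.mem_univ j₀) h
      rw [h1]
      exact hc_le j₀
    · push_neg at hx
      have h1 : (∑ j, c j * (B j).indicator (fun _ => (1:ℝ)) x) = 0 :=
        Finset.sum_eq_zero fun j _ => by simp [Set.indicator_of_notMem (hx j)]
      rw [h1]
      norm_num
  have hind1 : ∀ j, Integrable ((B j).indicator fun _ => (1:ℝ)) μm :=
    fun j => (integrable_const (1:ℝ)).indicator (hBm j)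
  -- the central inequality for the perturbed measure
  have hballρ : ∀ s : ℝ, |s| ≤ 1 → ∀ f : X → ℝ, LipschitzWith 1 f →
      (∫ x, f x ∂μm) + s * (∑ j, c j * ∫ x in B j, f x ∂μm)
        - (∑ i, m i * f (y i)) ≤ ε := by
    intro s hs f hf
    set hσ : X → ℝ := fun x => 1 + s * ∑ j, c j * (B j).indicator (fun _ => (1:ℝ)) x
      with hhσ
    have hσ0 : ∀ x, 0 ≤ hσ x := by
      intro x
      have h1 := hindsum_bound x
      have h2 : |s * ∑ j, c j * (B j).indicator (fun _ => (1:ℝ)) x| ≤ 1 / 2 := by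
        rw [abs_mul]
        calc |s| * |∑ j, c j * (B j).indicator (fun _ => (1:ℝ)) x|
            ≤ 1 * (1 / 2) := mul_le_mul hs h1 (abs_nonneg _) zero_le_one
          _ = 1 / 2 := by norm_num
      have h3 := (abs_le.mp h2).1
      simp only [hhσ]
      linarith
    have hdecomp : ∀ u : X → ℝ, (fun x => u x * hσ x)
        = u + ∑ j, (s * c j) • (B j).indicator u := by
      intro u
      funext x
      have h1 : ∀ j, ((s * c j) • (B j).indicator u) x
          = s * c j * ((B j).indicator (fun _ => (1:ℝ)) x * u x) := by
        intro j
        by_cases hx : x ∈ B j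
        · simp [Set.indicator_of_mem hx]
        · simp [Set.indicator_of_notMem hx]
      have h2 : (u + ∑ j, (s * c j) • (B j).indicator u) x
          = u x + ∑ j, s * c j * ((B j).indicator (fun _ => (1:ℝ)) x * u x) := by
        simp only [Pi.add_apply, Finset.sum_apply]
        rw [Finset.sum_congr rfl fun j (_ : j ∈ Finset.univ) => h1 j]
      have h3 : (∑ j, s * c j * ((B j).indicator (fun _ => (1:ℝ)) x * u x))
          = s * u x * ∑ j, c j * (B j).indicator (fun _ => (1:ℝ)) x := by
        rw [Finset.mul_sum]
        exact Finset.sum_congr rfl fun j _ => by ring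
      rw [h2, h3]
      simp only [hhσ]
      ring
    have hsumint : ∀ u : X → ℝ, Integrable u μm →
        Integrable (∑ j, (s * c j) • (B j).indicator u) μm := by
      intro u hu
      have hfun : (∑ j, (s * c j) • (B j).indicator u)
          = fun z => ∑ j, ((s * c j) • (B j).indicator u) z := by
        funext z
        simp
      rw [hfun]
      exact integrable_finset_sum _ fun j _ => ((hu.indicator (hBm j)).smul (s * c j))
    have hprodint : ∀ u : X → ℝ, Integrable u μm →
        Integrable (fun x => u x * hσ x) μm := by
      intro u hu
      rw [hdecomp u]
      exact hu.add (hsumint u hu)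
    have hlamprod : ∀ u : X → ℝ, Integrable u μm → ∀ i,
        lam (T i) (fun x => u x * hσ x)
          = lam (T i) u + s * ∑ j, c j * lam (T i) ((B j).indicator u) := by
      intro u hu i
      rw [hdecomp u, lam_add (T i) hu (hsumint u hu)]
      congr 1
      rw [lam_sum (T i) Finset.univ _ fun j _ => (hu.indicator (hBm j)).smul (s * c j)]
      rw [Finset.mul_sum]
      refine Finset.sum_congr rfl fun j _ => ?_
      rw [lam_smul (T i) (s * c j) (hu.indicator (hBm j))]
      ring
    have hfint : Integrable f μm := hint f hf
    have hdint : ∀ i, Integrable (fun x => dist x (y i)) μm :=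
      fun i => hint _ (LipschitzWith.dist_left (y i))
    have hgint : ∀ i, Integrable (fun x => f x - f (y i)) μm :=
      fun i => hfint.sub (integrable_const _)
    have hPQ : ∀ i, lam (T i) (fun x => (f x - f (y i)) * hσ x)
        ≤ lam (T i) (fun x => dist x (y i) * hσ x) := by
      intro i
      refine lam_mono (hpos i) (hprodint _ (hgint i)) (hprodint _ (hdint i)) ?_
      refine Filter.Eventually.of_forall fun x => ?_
      have h1 : f x - f (y i) ≤ dist x (y i) := by
        have h := hf.dist_le_mul x (y i)
        rw [Real.dist_eq] at h
        have h2 := le_abs_self (f x - f (y i))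
        simpa using le_trans h2 h
      exact mul_le_mul_of_nonneg_right h1 (hσ0 x)
    -- expand the left side
    have hgid : ∀ i, (fun x => f x - f (y i))
        = f + (-f (y i)) • (fun _ => (1:ℝ)) := by
      intro i
      funext x
      simp only [Pi.add_apply, Pi.smul_apply, smul_eq_mul]
      ring
    have hindid : ∀ i j, (B j).indicator (fun x => f x - f (y i))
        = (B j).indicator f + (-f (y i)) • (B j).indicator (fun _ => (1:ℝ)) := by
      intro i j
      funext x
      by_cases hx : x ∈ B j
      · simp only [Pi.add_apply, Pi.smul_apply, smul_eq_mul,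
          Set.indicator_of_mem hx]
        ring
      · simp [Set.indicator_of_notMem hx]
    have hlam_g : ∀ i, lam (T i) (fun x => f x - f (y i))
        = lam (T i) f - f (y i) * m i := by
      intro i
      rw [hgid i, lam_add (T i) hfint ((integrable_const (1:ℝ)).smul (-f (y i))),
        lam_smul (T i) (-f (y i)) (integrable_const (1:ℝ)), hΛone i]
      ring
    have hlam_indg : ∀ i j, lam (T i) ((B j).indicator fun x => f x - f (y i))
        = lam (T i) ((B j).indicator f) - f (y i) * q j i := by
      intro i j
      rw [hindid i j, lam_add (T i) (hfint.indicator (hBm j))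
        ((hind1 j).smul (-f (y i))), lam_smul (T i) (-f (y i)) (hind1 j), hq]
      ring
    -- left side sum
    have hLsum : (∑ i, lam (T i) (fun x => (f x - f (y i)) * hσ x))
        = (∫ x, f x ∂μm) + s * (∑ j, c j * ∫ x in B j, f x ∂μm)
          - ∑ i, m i * f (y i) := by
      have h1 : ∀ i, lam (T i) (fun x => (f x - f (y i)) * hσ x)
          = (lam (T i) f + s * ∑ j, c j * lam (T i) ((B j).indicator f))
            - f (y i) * (m i + s * ∑ j, c j * q j i) := by
        intro i
        rw [hlamprod _ (hgint i) i, hlam_g i]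
        rw [Finset.sum_congr rfl fun j (_ : j ∈ Finset.univ) => by rw [hlam_indg i j]]
        have hsplit : (∑ j, c j * (lam (T i) ((B j).indicator f) - f (y i) * q j i))
            = (∑ j, c j * lam (T i) ((B j).indicator f))
              - f (y i) * ∑ j, c j * q j i := by
          rw [Finset.mul_sum, ← Finset.sum_sub_distrib]
          refine Finset.sum_congr rfl fun j _ => by ring
        rw [hsplit]
        ring
      rw [Finset.sum_congr rfl fun i (_ : i ∈ Finset.univ) => h1 i]
      have h2 : ∀ i, (lam (T i) f + s * ∑ j, c j * lam (T i) ((B j).indicator f))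
            - f (y i) * (m i + s * ∑ j, c j * q j i)
          = (lam (T i) f + s * ∑ j, c j * lam (T i) ((B j).indicator f))
            - f (y i) * m i := by
        intro i
        rw [hmass i]
        ring
      rw [Finset.sum_congr rfl fun i (_ : i ∈ Finset.univ) => h2 i]
      rw [Finset.sum_sub_distrib, Finset.sum_add_distrib]
      have h3 : (∑ i, lam (T i) f) = ∫ x, f x ∂μm := hΛsum f hfint
      have h4 : (∑ i, s * ∑ j, c j * lam (T i) ((B j).indicator f))
          = s * ∑ j, c j * ∫ x in B j, f x ∂μm := by
        rw [← Finset.mul_sum]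
        congr 1
        rw [Finset.sum_comm]
        refine Finset.sum_congr rfl fun j _ => ?_
        rw [← hlam_ind_sum f hfint j, Finset.mul_sum]
      rw [h3, h4]
      have h5 : (∑ i, f (y i) * m i) = ∑ i, m i * f (y i) :=
        Finset.sum_congr rfl fun i _ => by ring
      rw [h5]
    -- right side sum
    have hRsum : (∑ i, lam (T i) (fun x => dist x (y i) * hσ x)) ≤ ε := by
      have h1 : ∀ i, lam (T i) (fun x => dist x (y i) * hσ x)
          = lam (T i) (fun x => dist x (y i))
            + s * ∑ j, c j * lam (T i) ((B j).indicator fun x => dist x (y i)) :=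
        fun i => hlamprod _ (hdint i) i
      rw [Finset.sum_congr rfl fun i (_ : i ∈ Finset.univ) => h1 i,
        Finset.sum_add_distrib]
      have h2 : (∑ i, s * ∑ j, c j * lam (T i) ((B j).indicator fun x => dist x (y i)))
          = s * ∑ j, c j * r j := by
        rw [← Finset.mul_sum]
        congr 1
        rw [Finset.sum_comm]
        refine Finset.sum_congr rfl fun j _ => ?_
        rw [hr, Finset.mul_sum]
      rw [h2, hcost, mul_zero, add_zero]
      exact hΛdist
    calc (∫ x, f x ∂μm) + s * (∑ j, c j * ∫ x in B j, f x ∂μm)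
          - (∑ i, m i * f (y i))
        = ∑ i, lam (T i) (fun x => (f x - f (y i)) * hσ x) := hLsum.symm
      _ ≤ ∑ i, lam (T i) (fun x => dist x (y i) * hσ x) :=
          Finset.sum_le_sum fun i _ => hPQ i
      _ ≤ ε := hRsum
  -- the perturbed measures
  set U : Set X := ⋃ j, B j with hUdef
  have hUm : MeasurableSet U := MeasurableSet.iUnion hBm
  set ρ : ℝ → Measure X := fun s =>
    (∑ j, ENNReal.ofReal (1 + s * c j) • μm.restrict (B j)) + μm.restrict Uᶜ with hρ
  have hcs : ∀ s : ℝ, |s| ≤ 1 → ∀ j, 0 ≤ 1 + s * c j := by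
    intro s hs j
    have h1 := hc_le j
    have h2 : |s * c j| ≤ 1 / 2 := by
      rw [abs_mul]
      nlinarith [abs_nonneg (c j), abs_nonneg s]
    have h3 := (abs_le.mp h2).1
    linarith
  have hρint : ∀ s : ℝ, |s| ≤ 1 → ∀ g : X → ℝ, Integrable g μm →
      Integrable g (ρ s) ∧
      ∫ x, g x ∂(ρ s) = (∫ x, g x ∂μm) + s * ∑ j, c j * ∫ x in B j, g x ∂μm := by
    intro s hs g hg
    have hparts : ∀ j, Integrable g (ENNReal.ofReal (1 + s * c j) • μm.restrict (B j)) :=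
      fun j => (hg.restrict).smul_measure ENNReal.ofReal_ne_top
    have hsumint : Integrable g (∑ j, ENNReal.ofReal (1 + s * c j) • μm.restrict (B j)) :=
      integrable_finset_sum_measure.mpr fun j _ => hparts j
    have hint2 : Integrable g (ρ s) := by
      simp only [hρ]
      exact hsumint.add_measure hg.restrict
    refine ⟨hint2, ?_⟩
    have hρval : ρ s = (∑ j, ENNReal.ofReal (1 + s * c j) • μm.restrict (B j))
        + μm.restrict Uᶜ := by simp only [hρ]
    rw [hρval, integral_add_measure hsumint hg.restrict,
      integral_finset_sum_measure fun j _ => hparts j]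
    have h1 : ∀ j, (∫ x, g x ∂(ENNReal.ofReal (1 + s * c j) • μm.restrict (B j)))
        = (1 + s * c j) * ∫ x in B j, g x ∂μm := by
      intro j
      rw [integral_smul_measure, ENNReal.toReal_ofReal (hcs s hs j), smul_eq_mul]
    rw [Finset.sum_congr rfl fun j _ => h1 j]
    have h2 : (∑ j, (1 + s * c j) * ∫ x in B j, g x ∂μm)
        = (∑ j, ∫ x in B j, g x ∂μm) + s * ∑ j, c j * ∫ x in B j, g x ∂μm := by
      rw [Finset.mul_sum, ← Finset.sum_add_distrib]
      exact Finset.sum_congr rfl fun j _ => by ring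
    rw [h2]
    have h3 := sum_setIntegral_eq B hBm hBd hg
    rw [← hUdef] at h3
    linarith
  have hUsum : μm U = ∑ j, μm (B j) := by
    rw [hUdef, measure_iUnion (fun i j hij => hBd hij) hBm, tsum_fintype]
  have htot : ∀ s : ℝ, |s| ≤ 1 → ρ s Set.univ = 1 := by
    intro s hs
    have hρval : ρ s = (∑ j, ENNReal.ofReal (1 + s * c j) • μm.restrict (B j))
        + μm.restrict Uᶜ := by simp only [hρ]
    rw [hρval, Measure.add_apply, Measure.finset_sum_apply]
    have h1 : ∀ j, (ENNReal.ofReal (1 + s * c j) • μm.restrict (B j)) Set.univ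
        = ENNReal.ofReal ((1 + s * c j) * (μm (B j)).toReal) := by
      intro j
      rw [Measure.smul_apply, Measure.restrict_apply MeasurableSet.univ, Set.univ_inter,
        smul_eq_mul, ENNReal.ofReal_mul (hcs s hs j),
        ENNReal.ofReal_toReal (measure_ne_top μm (B j))]
    rw [Finset.sum_congr rfl fun j (_ : j ∈ Finset.univ) => h1 j,
      ← ENNReal.ofReal_sum_of_nonneg fun j _ =>
        mul_nonneg (hcs s hs j) ENNReal.toReal_nonneg]
    have h2 : (∑ j, (1 + s * c j) * (μm (B j)).toReal) = ∑ j, (μm (B j)).toReal := by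
      have h4 : ∀ j, (1 + s * c j) * (μm (B j)).toReal
          = (μm (B j)).toReal + s * (c j * (μm (B j)).toReal) := fun j => by ring
      rw [Finset.sum_congr rfl fun j (_ : j ∈ Finset.univ) => h4 j,
        Finset.sum_add_distrib, ← Finset.mul_sum, hsum_cb, mul_zero, add_zero]
    rw [h2]
    have h3 : ENNReal.ofReal (∑ j, (μm (B j)).toReal) = μm U := by
      rw [ENNReal.ofReal_sum_of_nonneg fun j _ => ENNReal.toReal_nonneg,
        Finset.sum_congr rfl fun j (_ : j ∈ Finset.univ) =>
          ENNReal.ofReal_toReal (measure_ne_top μm (B j))]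
      exact hUsum.symm
    rw [h3, Measure.restrict_apply MeasurableSet.univ, Set.univ_inter,
      measure_add_measure_compl hUm, measure_univ]
  have hkant : ∀ s : ℝ, |s| ≤ 1 → kantDist (ρ s) ν ≤ ENNReal.ofReal ε := by
    intro s hs
    unfold kantDist
    refine iSup_le fun f => ?_
    refine ENNReal.ofReal_le_ofReal ?_
    have h1 := (hρint s hs f.1 (hint f.1 f.2)).2
    rw [h1, hνint f.1 f.2.continuous]
    have h2 := hballρ s hs f.1 f.2
    linarith
  -- assemble the convex decomposition
  have habs1 : |(1:ℝ)| ≤ 1 := by norm_num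
  have habs2 : |(-1:ℝ)| ≤ 1 := by norm_num
  have hP1 : IsProbabilityMeasure (ρ 1) := ⟨htot 1 habs1⟩
  have hP2 : IsProbabilityMeasure (ρ (-1)) := ⟨htot (-1) habs2⟩
  set μ₁ : ProbabilityMeasure X := ⟨ρ 1, hP1⟩ with hμ₁
  set μ₂ : ProbabilityMeasure X := ⟨ρ (-1), hP2⟩ with hμ₂
  have hmem1 : μ₁ ∈ {μ' : ProbabilityMeasure X |
      kantDist (μ' : Measure X) (μn : Measure X) ≤ ENNReal.ofReal ε} := hkant 1 habs1
  have hmem2 : μ₂ ∈ {μ' : ProbabilityMeasure X |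
      kantDist (μ' : Measure X) (μn : Measure X) ≤ ENNReal.ofReal ε} := hkant (-1) habs2
  have hhalfsum : (2⁻¹ : ENNReal) + 2⁻¹ = 1 := ENNReal.inv_two_add_inv_two
  have hhalf : (1 : ENNReal) - 2⁻¹ = 2⁻¹ :=
    ENNReal.sub_eq_of_eq_add (by simp) hhalfsum.symm
  have hscal : ∀ j, (2⁻¹ : ENNReal) * ENNReal.ofReal (1 + 1 * c j)
      + 2⁻¹ * ENNReal.ofReal (1 + (-1) * c j) = 1 := by
    intro j
    have e2 : (2⁻¹ : ENNReal) = ENNReal.ofReal (2⁻¹ : ℝ) := by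
      rw [ENNReal.ofReal_inv_of_pos (by norm_num)]
      norm_num
    rw [e2, ← ENNReal.ofReal_mul (by norm_num), ← ENNReal.ofReal_mul (by norm_num),
      ← ENNReal.ofReal_add (by nlinarith [hcs 1 habs1 j])
        (by nlinarith [hcs (-1) habs2 j]),
      show ((2:ℝ)⁻¹ * (1 + 1 * c j) + 2⁻¹ * (1 + (-1) * c j)) = 1 by ring,
      ENNReal.ofReal_one]
  have hcomb : (μ : Measure X) = (2⁻¹ : ENNReal) • (μ₁ : Measure X)
      + (1 - (2⁻¹ : ENNReal)) • (μ₂ : Measure X) := by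
    rw [hhalf]
    show μm = (2⁻¹ : ENNReal) • (ρ 1) + (2⁻¹ : ENNReal) • (ρ (-1))
    have hrw : ∀ s : ℝ, (2⁻¹ : ENNReal) • (ρ s)
        = (∑ j, ((2⁻¹ : ENNReal) * ENNReal.ofReal (1 + s * c j)) • μm.restrict (B j))
          + (2⁻¹ : ENNReal) • μm.restrict Uᶜ := by
      intro s
      have hρval : ρ s = (∑ j, ENNReal.ofReal (1 + s * c j) • μm.restrict (B j))
          + μm.restrict Uᶜ := by simp only [hρ]
      rw [hρval, smul_add, Finset.smul_sum]
      congr 1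
      exact Finset.sum_congr rfl fun j _ => smul_smul _ _ _
    rw [hrw 1, hrw (-1), add_add_add_comm, ← Finset.sum_add_distrib]
    have h1 : ∀ j, ((2⁻¹ : ENNReal) * ENNReal.ofReal (1 + 1 * c j)) • μm.restrict (B j)
        + ((2⁻¹ : ENNReal) * ENNReal.ofReal (1 + (-1) * c j)) • μm.restrict (B j)
        = μm.restrict (B j) := by
      intro j
      rw [← add_smul, hscal j, one_smul]
    rw [Finset.sum_congr rfl fun j (_ : j ∈ Finset.univ) => h1 j]
    have h2 : (2⁻¹ : ENNReal) • μm.restrict Uᶜ + (2⁻¹ : ENNReal) • μm.restrict Uᶜ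
        = μm.restrict Uᶜ := by
      rw [← add_smul, hhalfsum, one_smul]
    rw [h2]
    rw [hUdef]
    exact (sum_restrict_add_compl B hBm hBd).symm
  have hθ0 : (0 : ENNReal) < 2⁻¹ := by simp
  have hθ1 : (2⁻¹ : ENNReal) < 1 := by
    rw [ENNReal.inv_lt_one]
    exact ENNReal.one_lt_two
  have hext := hμ.2 μ₁ hmem1 μ₂ hmem2 2⁻¹ hθ0 hθ1 hcomb
  -- derive the contradiction
  have hcoe1 : ρ 1 = μm := by
    have h := hext.1
    have h2 : (μ₁ : Measure X) = (μ : Measure X) := by rw [h]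
    exact h2
  have hval : ρ 1 (B j₁) = ENNReal.ofReal (1 + 1 * c j₁) * μm (B j₁) := by
    have hρval : ρ 1 = (∑ j, ENNReal.ofReal (1 + 1 * c j) • μm.restrict (B j))
        + μm.restrict Uᶜ := by simp only [hρ]
    rw [hρval, Measure.add_apply, Measure.finset_sum_apply]
    have h1 : ∀ j, (ENNReal.ofReal (1 + 1 * c j) • μm.restrict (B j)) (B j₁)
        = if j = j₁ then ENNReal.ofReal (1 + 1 * c j) * μm (B j₁) else 0 := by
      intro j
      rw [Measure.smul_apply, Measure.restrict_apply (hBm j₁), smul_eq_mul]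
      by_cases h : j = j₁
      · subst h
        rw [Set.inter_self, if_pos rfl]
      · rw [if_neg h]
        have hdis : B j₁ ∩ B j = ∅ :=
          Set.disjoint_iff_inter_eq_empty.mp (hBd fun he => h he.symm)
        rw [hdis, measure_empty, mul_zero]
    rw [Finset.sum_congr rfl fun j (_ : j ∈ Finset.univ) => h1 j,
      Finset.sum_ite_eq' Finset.univ j₁
        fun j => ENNReal.ofReal (1 + 1 * c j) * μm (B j₁)]
    have h2 : (μm.restrict Uᶜ) (B j₁) = 0 := by
      rw [Measure.restrict_apply (hBm j₁)]
      have hsub : B j₁ ⊆ U := by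
        rw [hUdef]
        exact Set.subset_iUnion B j₁
      have hempty : B j₁ ∩ Uᶜ = ∅ :=
        Set.eq_empty_iff_forall_notMem.mpr fun x hx => hx.2 (hsub hx.1)
      rw [hempty, measure_empty]
    rw [h2, add_zero, if_pos (Finset.mem_univ j₁)]
  have heqB : ENNReal.ofReal (1 + 1 * c j₁) * μm (B j₁) = μm (B j₁) := by
    rw [← hval, hcoe1]
  have hb0 : μm (B j₁) ≠ 0 := (hBpos j₁).ne'
  have hbt : μm (B j₁) ≠ ⊤ := measure_ne_top _ _
  have h2 : (1 + 1 * c j₁) * (μm (B j₁)).toReal = (μm (B j₁)).toReal := by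
    have h3 := congrArg ENNReal.toReal heqB
    rwa [ENNReal.toReal_mul, ENNReal.toReal_ofReal (hcs 1 habs1 j₁)] at h3
  have hbr : 0 < (μm (B j₁)).toReal := ENNReal.toReal_pos hb0 hbt
  have h6 : c j₁ * (μm (B j₁)).toReal = 0 := by linear_combination h2
  exact hcj ((mul_eq_zero.mp h6).resolve_right hbr.ne')

end KantMain

/-- every extreme point of the closed Kantorovich ball of radius `ε` about
a measure supported on at most `n` points is supported on at most `n+2` points. -/
theorem extremePt_kantorovich_ball_finitelySupported
    {Y : Type*} [MetricSpace Y] [PolishSpace Y] [MeasurableSpace Y] [BorelSpace Y]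
    (s : Set Y) (hs : MeasurableSet s) (n : ℕ)
    (μn : ProbabilityMeasure s) (hμn : FinitelySupported n (μn : Measure s))
    (ε : ℝ) (hε : 0 < ε) (μ : ProbabilityMeasure s)
    (hμ : IsExtremePt
      {μ' : ProbabilityMeasure s |
        kantDist (μ' : Measure s) (μn : Measure s) ≤ ENNReal.ofReal ε} μ) :
    FinitelySupported (n + 2) (μ : Measure s) :=
  KantMain.main_thm n μn hμn ε hε μ hμ
end
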